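/- arXiv:1509.07231 — 6 statements merged into one kernel-verified Lean document; each statement's English description precedes it below -/
import Mathlib

section
/- Let ω ∈ ℱ¹(ℙⁿ,e) belong to the class 𝒰. (i) If K(ω) and 𝒞(dω) are comaximal, i.e., K(ω) + 𝒞(dω) = S, then I(ω) + L(ω) = S and I(ω) ∩ L(ω) = J(ω); consequently there is an isomorphism of graded S-modules I(ω)/J(ω) ≅ S/L(ω) induced by the inclusion I(ω) ⊆ S. (ii) If instead 𝔪 ⊆ √(K(ω) + 𝒞(dω)) (i.e., the Kupka scheme is disjoint from the projective zero locus of 𝒞(dω)), then the Hilbert polynomials of I(ω)/J(ω) and of S/L(ω) coincide; equivalently, for all sufficiently large degrees d, dim_ℂ (I(ω)/J(ω))_d = dim_ℂ (S/L(ω))_d. -/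
open MvPolynomial

noncomputable section

abbrev PolyS (n : ℕ) := MvPolynomial (Fin (n+1)) ℂ

/-- The coefficient of `dω` at `dx_i ∧ dx_j`, where `ω` is the 1-form `Σ ω i dx_i`. -/
def dcoeff {n : ℕ} (ω : Fin (n+1) → PolyS n) (i j : Fin (n+1)) : PolyS n :=
  pderiv i (ω j) - pderiv j (ω i)

/-- Integrability `ω ∧ dω = 0`, written in coordinates. -/
def Integrable {n : ℕ} (ω : Fin (n+1) → PolyS n) : Prop :=
  ∀ i j k, ω i * dcoeff ω j k - ω j * dcoeff ω i k + ω k * dcoeff ω i j = 0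

/-- The singular ideal `J(ω)`, generated by the coefficients of `ω`. -/
def Jideal {n : ℕ} (ω : Fin (n+1) → PolyS n) : Ideal (PolyS n) :=
  Ideal.span (Set.range ω)

/-- The ideal `𝒞(dω)` of coefficients of `dω`. -/
def Cdiff {n : ℕ} (ω : Fin (n+1) → PolyS n) : Ideal (PolyS n) :=
  Ideal.span {g | ∃ i j, g = dcoeff ω i j}

/-- The unfoldings ideal `I(ω) = {h : h·dω = ω ∧ η for some 1-form η}`. -/
def Iideal {n : ℕ} (ω : Fin (n+1) → PolyS n) : Ideal (PolyS n) where
  carrier := {h | ∃ η : Fin (n+1) → PolyS n,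
    ∀ i j, h * dcoeff ω i j = ω i * η j - ω j * η i}
  add_mem' := by
    rintro a b ⟨η, hη⟩ ⟨ξ, hξ⟩
    exact ⟨η + ξ, fun i j => by
      simp only [Pi.add_apply]
      linear_combination hη i j + hξ i j⟩
  zero_mem' := ⟨0, fun i j => by simp⟩
  smul_mem' := by
    rintro c a ⟨η, hη⟩
    exact ⟨c • η, fun i j => by
      simp only [smul_eq_mul, Pi.smul_apply]
      linear_combination c * hη i j⟩

/-- The Kupka ideal `K(ω) = (J(ω) : 𝒞(dω))`. -/
def Kideal {n : ℕ} (ω : Fin (n+1) → PolyS n) : Ideal (PolyS n) :=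
  (Jideal ω).colon (Cdiff ω)

/-- The non-Kupka ideal `L(ω) = (J(ω) : K(ω)^∞)`. -/
def Lideal {n : ℕ} (ω : Fin (n+1) → PolyS n) : Ideal (PolyS n) :=
  ⨆ d : ℕ, (Jideal ω).colon (((Kideal ω) ^ (d+1) : Ideal (PolyS n)) : Set (PolyS n))

/-- The irrelevant ideal `(x_0, …, x_n)`. -/
def irrelevant (n : ℕ) : Ideal (PolyS n) := Ideal.span (Set.range X)

/-- `height I ≥ k` : every prime containing `I` has height at least `k`. -/
def heightGE {n : ℕ} (I : Ideal (PolyS n)) (k : ℕ) : Prop :=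
  ∀ p : PrimeSpectrum (PolyS n), I ≤ p.asIdeal → (k : ℕ∞) ≤ Order.height p

/-- `ω ∈ ℱ¹(ℙⁿ, e)` : a foliation one-form of degree `e` on `ℙⁿ`. -/
def IsFoliation (n e : ℕ) (ω : Fin (n+1) → PolyS n) : Prop :=
  ω ≠ 0 ∧ 2 ≤ e ∧ (∀ i, (ω i).IsHomogeneous (e-1)) ∧ Integrable ω ∧
  (∑ i, X i * ω i = 0) ∧ heightGE (Jideal ω) 2

/-- A homogeneous ideal: stable under taking homogeneous components. -/
def IsHomogIdeal {n : ℕ} (p : Ideal (PolyS n)) : Prop :=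
  ∀ h ∈ p, ∀ d : ℕ, homogeneousComponent d h ∈ p

/-- A relevant prime: a homogeneous prime different from the irrelevant ideal. -/
def IsRelevantPrime {n : ℕ} (p : Ideal (PolyS n)) : Prop :=
  p.IsPrime ∧ IsHomogIdeal p ∧ p ≠ irrelevant n

/-- A relevant prime `p` is a division point of `ω` iff `I(ω) ⊄ p`. -/
def DivisionPoint {n : ℕ} (ω : Fin (n+1) → PolyS n) (p : Ideal (PolyS n)) : Prop :=
  ¬ (Iideal ω ≤ p)

/-- The class `𝒰`. -/
def InU {n : ℕ} (ω : Fin (n+1) → PolyS n) : Prop :=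
  ∀ p : Ideal (PolyS n), IsRelevantPrime p → ¬ (Kideal ω ≤ p) → DivisionPoint ω p

/-- The degree-`d` homogeneous component of an ideal `A ⊆ S`, as a `ℂ`-subspace of `S`. -/
def homogComp {n : ℕ} (A : Ideal (PolyS n)) (d : ℕ) : Submodule ℂ (PolyS n) :=
  (Submodule.restrictScalars ℂ A) ⊓ (homogeneousSubmodule (Fin (n+1)) ℂ d)

namespace Stmt6Aux

open MvPolynomial

attribute [local instance] MvPolynomial.gradedAlgebra

variable {n e : ℕ}

/-! ### Substitution of a variable by zero -/

def subZ (i : Fin (n+1)) : PolyS n →ₐ[ℂ] PolyS n :=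
  aeval (fun j => if j = i then 0 else X j)

lemma subZ_X_self (i : Fin (n+1)) : subZ i (X i) = 0 := by
  simp [subZ]

lemma subZ_X_ne (i j : Fin (n+1)) (h : j ≠ i) : subZ i (X j) = X j := by
  simp [subZ, h]

lemma X_dvd_sub_subZ (i : Fin (n+1)) (p : PolyS n) : X i ∣ p - subZ i p := by
  induction p using MvPolynomial.induction_on with
  | C a => simp [subZ]
  | add p q hp hq =>
      rw [map_add, add_sub_add_comm]
      exact dvd_add hp hq
  | mul_X p j hp =>
      rw [map_mul]
      by_cases h : j = i
      · subst h
        rw [subZ_X_self, mul_zero, sub_zero]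
        exact dvd_mul_left _ _
      · rw [subZ_X_ne i j h, ← sub_mul]
        exact hp.mul_right _

lemma subZ_idem (i : Fin (n+1)) (p : PolyS n) : subZ i (subZ i p) = subZ i p := by
  induction p using MvPolynomial.induction_on with
  | C a => simp [subZ]
  | add p q hp hq => rw [map_add, map_add, hp, hq]
  | mul_X p j hp =>
      rw [map_mul, map_mul, hp]
      refine congrArg (fun t => subZ i p * t) ?_
      by_cases h : j = i
      · subst h; rw [subZ_X_self, map_zero]
      · rw [subZ_X_ne i j h, subZ_X_ne i j h]

lemma X_dvd_iff_subZ {i : Fin (n+1)} {p : PolyS n} : X i ∣ p ↔ subZ i p = 0 := by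
  constructor
  · rintro ⟨q, rfl⟩
    rw [map_mul, subZ_X_self, zero_mul]
  · intro h
    have h2 := X_dvd_sub_subZ i p
    rwa [h, sub_zero] at h2

lemma prime_X (i : Fin (n+1)) : Prime (X i : PolyS n) := by
  refine ⟨MvPolynomial.X_ne_zero i, ?_, ?_⟩
  · intro h
    have h1 : (X i : PolyS n) ∣ 1 := h.dvd
    rw [X_dvd_iff_subZ, map_one] at h1
    exact one_ne_zero h1
  · intro a b hab
    rw [X_dvd_iff_subZ, map_mul] at hab
    rcases mul_eq_zero.mp hab with h | h
    · exact Or.inl (X_dvd_iff_subZ.mpr h)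
    · exact Or.inr (X_dvd_iff_subZ.mpr h)

/-! ### Miscellaneous -/

lemma exists_ne_zero {ω : Fin (n+1) → PolyS n} (hω : ω ≠ 0) : ∃ i, ω i ≠ 0 := by
  by_contra h
  push_neg at h
  exact hω (funext h)

lemma cancel_omega {ω : Fin (n+1) → PolyS n} (hω : ω ≠ 0) {a : PolyS n}
    (h : ∀ j, a * ω j = 0) : a = 0 := by
  obtain ⟨j, hj⟩ := exists_ne_zero hω
  rcases mul_eq_zero.mp (h j) with h' | h'
  · exact h'
  · exact absurd h' hj

/-! ### Height -/

lemma eq_bot_of_lt_span {q : PolyS n} (hq : Prime q) {P : Ideal (PolyS n)} (hP : P.IsPrime)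
    (hlt : P < Ideal.span {q}) : P = ⊥ := by
  have key : ∀ f : PolyS n, f ∈ P → f = 0 := by
    intro f
    refine (wellFounded_dvdNotUnit (α := PolyS n)).induction
      (C := fun f => f ∈ P → f = 0) f ?_
    intro f IH hf
    have hfq : f ∈ Ideal.span {q} := le_of_lt hlt hf
    obtain ⟨g, hg⟩ := Ideal.mem_span_singleton.mp hfq
    have hqP : q ∉ P := fun hqP => hlt.not_ge ((Ideal.span_singleton_le_iff_mem P).mpr hqP)
    have hgP : g ∈ P := ((hP.mem_or_mem (hg ▸ hf)).resolve_left hqP)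
    by_cases hg0 : g = 0
    · rw [hg, hg0, mul_zero]
    · have hgz := IH g ⟨hg0, q, hq.not_unit, by rw [hg, mul_comm]⟩ hgP
      rw [hg, hgz, mul_zero]
  rw [eq_bot_iff]
  intro f hf
  rw [Submodule.mem_bot]
  exact key f hf

lemma no_common_prime {ω : Fin (n+1) → PolyS n} (hht : heightGE (Jideal ω) 2) {q : PolyS n}
    (hq : Prime q) (hdvd : ∀ j, q ∣ ω j) : False := by
  have hle : Jideal ω ≤ Ideal.span {q} := by
    rw [Jideal, Ideal.span_le]
    rintro _ ⟨j, rfl⟩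
    exact Ideal.mem_span_singleton.mpr (hdvd j)
  have hprime : (Ideal.span {q} : Ideal (PolyS n)).IsPrime :=
    (Ideal.span_singleton_prime hq.ne_zero).mpr hq
  have h2 := hht ⟨Ideal.span {q}, hprime⟩ hle
  have hlt : ∀ x y : PrimeSpectrum (PolyS n), x < y → x.asIdeal < y.asIdeal := by
    intro x y hxy
    rw [lt_iff_le_and_ne] at hxy ⊢
    refine ⟨(PrimeSpectrum.asIdeal_le_asIdeal _ _).mpr hxy.1, fun h => hxy.2 ?_⟩
    exact PrimeSpectrum.ext h
  have h1 : Order.height (⟨Ideal.span {q}, hprime⟩ : PrimeSpectrum (PolyS n)) ≤ 1 := by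
    apply Order.height_le
    intro p hp
    by_contra hlen
    have hlen2 : 2 ≤ p.length := by
      by_contra h'
      push_neg at h'
      apply hlen
      have : p.length ≤ 1 := by omega
      exact_mod_cast this
    have hblt : p.toFun ⟨p.length - 1, by omega⟩ < p.toFun ⟨p.length, by omega⟩ := by
      apply p.strictMono
      rw [Fin.mk_lt_mk]
      omega
    have hclt : p.toFun ⟨p.length - 2, by omega⟩ < p.toFun ⟨p.length - 1, by omega⟩ := by
      apply p.strictMono
      rw [Fin.mk_lt_mk]
      omega
    have hlast : p.toFun ⟨p.length, by omega⟩ = ⟨Ideal.span {q}, hprime⟩ := by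
      rw [← hp]
      rfl
    rw [hlast] at hblt
    have hb := eq_bot_of_lt_span hq (p.toFun ⟨p.length - 1, by omega⟩).2 (hlt _ _ hblt)
    have hc := hlt _ _ hclt
    rw [hb] at hc
    exact not_lt_bot hc
  have : (2 : ℕ∞) ≤ 1 := le_trans h2 h1
  norm_num at this

/-! ### Division lemma -/

lemma division {ω : Fin (n+1) → PolyS n} (hω : ω ≠ 0) (hht : heightGE (Jideal ω) 2)
    (ζ : Fin (n+1) → PolyS n) (hrel : ∀ i j, ω i * ζ j = ω j * ζ i) :
    ∃ g, ∀ j, ζ j = g * ω j := by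
  obtain ⟨i0, hi0⟩ := exists_ne_zero hω
  obtain ⟨u', v', w, hcop, hu, hv⟩ :=
    UniqueFactorizationMonoid.exists_reduced_factors (ω i0) hi0 (ζ i0)
  have hw : w ≠ 0 := fun h => hi0 (by rw [← hu, h, zero_mul])
  have hu' : u' ≠ 0 := fun h => hi0 (by rw [← hu, h, mul_zero])
  have key : ∀ j, u' * ζ j = v' * ω j := by
    intro j
    have h0 := hrel i0 j
    apply mul_left_cancel₀ hw
    linear_combination ζ j * hu - ω j * hv + h0
  have hdvd : ∀ j, u' ∣ ω j := by
    intro j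
    refine UniqueFactorizationMonoid.dvd_of_dvd_mul_right_of_no_prime_factors hu'
      (fun {d} hdu hdv hpd => hpd.not_unit (hcop hdu hdv)) ⟨ζ j, (key j).symm⟩
  by_cases hunit : IsUnit u'
  · obtain ⟨t, ht⟩ := isUnit_iff_exists_inv.mp hunit
    refine ⟨t * v', fun j => ?_⟩
    linear_combination t * key j - ζ j * ht
  · obtain ⟨d, hdirr, hddvd⟩ := WfDvdMonoid.exists_irreducible_factor hunit hu'
    exact absurd (fun j => hddvd.trans (hdvd j))
      (fun h => no_common_prime hht (UniqueFactorizationMonoid.irreducible_iff_prime.mp hdirr) h)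

/-! ### Homogeneous components and products -/

lemma comp_mul {k : ℕ} {b : PolyS n} (hb : b.IsHomogeneous k) (r : PolyS n) (m : ℕ) :
    homogeneousComponent (m + k) (r * b) = homogeneousComponent m r * b := by
  conv_lhs => rw [← sum_homogeneousComponent r]
  rw [Finset.sum_mul, map_sum]
  have hterm : ∀ i, homogeneousComponent (m + k) (homogeneousComponent i r * b)
      = if m = i then homogeneousComponent i r * b else 0 := by
    intro i
    have hmem : (homogeneousComponent i r * b).IsHomogeneous (i + k) :=
      (homogeneousComponent_isHomogeneous i r).mul hb
    rw [homogeneousComponent_of_mem ((mem_homogeneousSubmodule _ _).mpr hmem)]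
    by_cases h : m = i
    · rw [if_pos (by omega), if_pos h]
    · rw [if_neg (by omega), if_neg h]
  rw [Finset.sum_congr rfl (fun i _ => hterm i), Finset.sum_ite_eq]
  by_cases hm : m ∈ Finset.range (r.totalDegree + 1)
  · rw [if_pos hm]
  · rw [if_neg hm]
    have h0 : homogeneousComponent m r = 0 :=
      homogeneousComponent_eq_zero _ r (by simp only [Finset.mem_range] at hm; omega)
    rw [h0, zero_mul]

lemma comp_mul_lt {k : ℕ} {b : PolyS n} (hb : b.IsHomogeneous k) (r : PolyS n) {d : ℕ}
    (hd : d < k) : homogeneousComponent d (r * b) = 0 := by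
  conv_lhs => rw [← sum_homogeneousComponent r]
  rw [Finset.sum_mul, map_sum]
  apply Finset.sum_eq_zero
  intro i _
  have hmem : (homogeneousComponent i r * b).IsHomogeneous (i + k) :=
    (homogeneousComponent_isHomogeneous i r).mul hb
  rw [homogeneousComponent_of_mem ((mem_homogeneousSubmodule _ _).mpr hmem)]
  rw [if_neg (by omega)]

/-! ### The irrelevant ideal -/

lemma X_mem_irrelevant (i : Fin (n+1)) : (X i : PolyS n) ∈ irrelevant n :=
  Ideal.subset_span ⟨i, rfl⟩

lemma mem_irrelevant_iff (f : PolyS n) : f ∈ irrelevant n ↔ constantCoeff f = 0 := by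
  constructor
  · intro hf
    have hle : irrelevant n ≤ RingHom.ker (constantCoeff : PolyS n →+* ℂ) := by
      rw [irrelevant, Ideal.span_le]
      rintro _ ⟨i, rfl⟩
      simp [RingHom.mem_ker]
    exact hle hf
  · intro hf
    rw [← support_sum_monomial_coeff f]
    apply Ideal.sum_mem
    intro v hv
    by_cases hv0 : v = 0
    · have : coeff v f = 0 := by rwa [hv0, ← constantCoeff_eq]
      rw [this, monomial_zero]
      exact zero_mem _
    · obtain ⟨i, hi⟩ : ∃ i, v i ≠ 0 := by
        by_contra h
        push_neg at h
        exact hv0 (Finsupp.ext h)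
      have hsingle : Finsupp.single i 1 ≤ v := by
        rw [Finsupp.single_le_iff]
        omega
      have hmono : monomial v (coeff v f) = X i * monomial (v - Finsupp.single i 1) (coeff v f) := by
        rw [X, monomial_mul, one_mul, add_tsub_cancel_of_le hsingle]
      rw [hmono]
      exact Ideal.mul_mem_right _ _ (X_mem_irrelevant i)

lemma irrelevant_ne_top : irrelevant n ≠ ⊤ := by
  intro h
  have h1 : (1 : PolyS n) ∈ irrelevant n := h ▸ Submodule.mem_top
  rw [mem_irrelevant_iff, map_one] at h1
  exact one_ne_zero h1

lemma degree_single (i : Fin (n+1)) (k : ℕ) : Finsupp.degree (Finsupp.single i k) = k := by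
  classical
  rw [Finsupp.degree]
  by_cases hk : k = 0
  · subst hk; simp
  · exact Finsupp.degree_single i k

lemma degree_add (a b : Fin (n+1) →₀ ℕ) :
    Finsupp.degree (a + b) = Finsupp.degree a + Finsupp.degree b := by
  simp only [Finsupp.degree_eq_weight_one, map_add]

lemma monomial_mem_pow (v : Fin (n+1) →₀ ℕ) (c : ℂ) :
    monomial v c ∈ irrelevant n ^ (Finsupp.degree v) := by
  induction v using Finsupp.induction with
  | zero =>
      have : Finsupp.degree (0 : Fin (n+1) →₀ ℕ) = 0 := map_zero _
      rw [this, pow_zero, Ideal.one_eq_top]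
      exact Submodule.mem_top
  | single_add i b v hiv hb ih =>
      have hmono : monomial (Finsupp.single i b + v) c = X i ^ b * monomial v c := by
        rw [X_pow_eq_monomial, monomial_mul, one_mul]
      rw [hmono, degree_add, degree_single, pow_add]
      exact Ideal.mul_mem_mul (Ideal.pow_mem_pow (X_mem_irrelevant i) b) ih

lemma homog_mem_pow_irrelevant {d : ℕ} {p : PolyS n} (hp : p.IsHomogeneous d) :
    p ∈ irrelevant n ^ d := by
  rw [← support_sum_monomial_coeff p]
  apply Ideal.sum_mem
  intro v hv
  have hdeg : Finsupp.degree v = d := by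
    by_contra h
    exact (mem_support_iff.mp hv) (hp.coeff_eq_zero h)
  rw [← hdeg]
  exact monomial_mem_pow v _

/-! ### Homogeneous ideals (custom predicate) -/

lemma isHomog_top : IsHomogIdeal (⊤ : Ideal (PolyS n)) := fun _ _ _ => Submodule.mem_top

lemma isHomog_span {s : Set (PolyS n)} (hs : ∀ f ∈ s, ∃ d, f.IsHomogeneous d) :
    IsHomogIdeal (Ideal.span s) := by
  intro h hh d
  obtain ⟨c, hsupp, rfl⟩ := Submodule.mem_span_set.mp hh
  rw [Finsupp.sum, map_sum]
  apply Ideal.sum_mem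
  intro g hg
  obtain ⟨k, hk⟩ := hs g (hsupp hg)
  rw [smul_eq_mul]
  by_cases hdk : k ≤ d
  · obtain ⟨m, rfl⟩ := Nat.exists_eq_add_of_le hdk
    rw [add_comm k m, comp_mul hk]
    exact Ideal.mul_mem_left _ _ (Ideal.subset_span (hsupp hg))
  · rw [comp_mul_lt hk _ (by omega)]
    exact zero_mem _

lemma eq_span_homog {A : Ideal (PolyS n)} (hA : IsHomogIdeal A) :
    A = Ideal.span {f | f ∈ A ∧ ∃ d, f.IsHomogeneous d} := by
  apply le_antisymm
  · intro f hf
    rw [← sum_homogeneousComponent f]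
    exact Ideal.sum_mem _ fun i _ =>
      Ideal.subset_span ⟨hA f hf i, i, homogeneousComponent_isHomogeneous i f⟩
  · rw [Ideal.span_le]
    exact fun f hf => hf.1

lemma homogMul {A B : Ideal (PolyS n)} (hA : IsHomogIdeal A) (hB : IsHomogIdeal B) :
    IsHomogIdeal (A * B) := by
  rw [eq_span_homog hA, eq_span_homog hB, Ideal.span_mul_span']
  apply isHomog_span
  rintro f ⟨a, ha, b, hb, rfl⟩
  obtain ⟨da, hda⟩ := ha.2
  obtain ⟨db, hdb⟩ := hb.2
  exact ⟨da + db, hda.mul hdb⟩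

lemma homogPow {B : Ideal (PolyS n)} (hB : IsHomogIdeal B) (m : ℕ) :
    IsHomogIdeal (B ^ m) := by
  induction m with
  | zero => rw [pow_zero, Ideal.one_eq_top]; exact isHomog_top
  | succ m ih => rw [pow_succ]; exact homogMul ih hB

lemma homogColon {A B : Ideal (PolyS n)} (hA : IsHomogIdeal A) (hB : IsHomogIdeal B) :
    IsHomogIdeal (A.colon B) := by
  intro f hf d
  rw [Submodule.mem_colon]
  intro p hp
  rw [smul_eq_mul]
  have hsum : homogeneousComponent d f * p
      = ∑ k ∈ Finset.range (p.totalDegree + 1), homogeneousComponent d f * homogeneousComponent k p := by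
    rw [← Finset.mul_sum, sum_homogeneousComponent]
  rw [hsum]
  apply Ideal.sum_mem
  intro k _
  have hk : (homogeneousComponent k p).IsHomogeneous k := homogeneousComponent_isHomogeneous k p
  rw [← comp_mul hk f d]
  apply hA
  have h1 : f • homogeneousComponent k p ∈ A := Submodule.mem_colon.mp hf _ (hB p hp k)
  simpa using h1

lemma homogSup {A B : Ideal (PolyS n)} (hA : IsHomogIdeal A) (hB : IsHomogIdeal B) :
    IsHomogIdeal (A ⊔ B) := by
  intro f hf d
  obtain ⟨a, ha, b, hb, rfl⟩ := Submodule.mem_sup.mp hf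
  rw [map_add]
  exact Submodule.add_mem_sup (hA a ha d) (hB b hb d)

lemma homogInf {A B : Ideal (PolyS n)} (hA : IsHomogIdeal A) (hB : IsHomogIdeal B) :
    IsHomogIdeal (A ⊓ B) :=
  fun f hf d => ⟨hA f hf.1 d, hB f hf.2 d⟩

/-! ### Bridge to mathlib's graded machinery -/

lemma decompose_eq_comp (p : PolyS n) (i : ℕ) :
    ((DirectSum.decompose (homogeneousSubmodule (Fin (n+1)) ℂ) p) i : PolyS n)
      = homogeneousComponent i p := by
  conv_lhs => rw [← sum_homogeneousComponent p]
  rw [DirectSum.decompose_sum, DFinsupp.finset_sum_apply, AddSubmonoidClass.coe_finset_sum]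
  have hterm : ∀ k, ((DirectSum.decompose (homogeneousSubmodule (Fin (n+1)) ℂ)
      (homogeneousComponent k p)) i : PolyS n)
        = if i = k then homogeneousComponent k p else 0 := by
    intro k
    by_cases h : i = k
    · subst h
      rw [if_pos rfl, DirectSum.decompose_of_mem_same]
      exact homogeneousComponent_mem _ _
    · rw [if_neg h, DirectSum.decompose_of_mem_ne _ (homogeneousComponent_mem k p) (Ne.symm h)]
  rw [Finset.sum_congr rfl fun k _ => hterm k, Finset.sum_ite_eq]
  by_cases hi : i ∈ Finset.range (p.totalDegree + 1)
  · rw [if_pos hi]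
  · rw [if_neg hi, eq_comm]
    exact homogeneousComponent_eq_zero _ p (by simp only [Finset.mem_range] at hi; omega)

lemma toMathlib {A : Ideal (PolyS n)} (hA : IsHomogIdeal A) :
    Ideal.IsHomogeneous (homogeneousSubmodule (Fin (n+1)) ℂ) A := by
  intro i r hr
  rw [decompose_eq_comp]
  exact hA r hr i

lemma fromMathlib {A : Ideal (PolyS n)}
    (hA : Ideal.IsHomogeneous (homogeneousSubmodule (Fin (n+1)) ℂ) A) : IsHomogIdeal A := by
  intro f hf d
  have := hA d hf
  rwa [decompose_eq_comp] at this

lemma rad_ge {A : Ideal (PolyS n)} (hA : IsHomogIdeal A)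
    (h : ∀ P : Ideal (PolyS n), P.IsPrime → IsHomogIdeal P → A ≤ P → irrelevant n ≤ P) :
    irrelevant n ≤ A.radical := by
  rw [Ideal.IsHomogeneous.radical_eq (toMathlib hA)]
  refine le_sInf ?_
  rintro P ⟨hPhom, hAP, hPprime⟩
  exact h P hPprime (fromMathlib hPhom) hAP

lemma homog_eq_top_of_not_le_irrelevant {A : Ideal (PolyS n)} (hA : IsHomogIdeal A)
    (h : ¬ A ≤ irrelevant n) : A = ⊤ := by
  obtain ⟨f, hfA, hfm⟩ := SetLike.not_le_iff_exists.mp h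
  rw [mem_irrelevant_iff] at hfm
  have hmem : C (constantCoeff f) ∈ A := by
    have h0 := hA f hfA 0
    rwa [homogeneousComponent_zero, ← constantCoeff_eq] at h0
  exact Ideal.eq_top_of_isUnit_mem _ hmem
    (IsUnit.of_mul_eq_one (C (constantCoeff f)⁻¹)
      (by rw [← C_mul, mul_inv_cancel₀ hfm, C_1]))

/-! ### pderiv and homogeneity -/

lemma pderiv_homog {f : PolyS n} {m : ℕ} (hf : f.IsHomogeneous (m+1)) (i : Fin (n+1)) :
    (pderiv i f).IsHomogeneous m := by
  have hf0 : f = ∑ v ∈ f.support, monomial v (coeff v f) := (support_sum_monomial_coeff f).symm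
  rw [hf0, map_sum]
  apply IsHomogeneous.sum
  intro v hv
  rw [pderiv_monomial]
  by_cases hvi : v i = 0
  · rw [hvi, Nat.cast_zero, mul_zero, monomial_zero]
    exact isHomogeneous_zero _ _ _
  · apply isHomogeneous_monomial
    have hdeg : Finsupp.degree v = m + 1 := by
      by_contra hcon
      exact (mem_support_iff.mp hv) (hf.coeff_eq_zero hcon)
    have hle : Finsupp.single i 1 ≤ v := by
      rw [Finsupp.single_le_iff]; omega
    have hsplit : (v - Finsupp.single i 1) + Finsupp.single i 1 = v := tsub_add_cancel_of_le hle
    have hda := congrArg Finsupp.degree hsplit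
    rw [degree_add, degree_single] at hda
    omega

variable {ω : Fin (n+1) → PolyS n}

lemma dcoeff_homog (he : 2 ≤ e) (hhom : ∀ i, (ω i).IsHomogeneous (e-1)) (i j : Fin (n+1)) :
    (dcoeff ω i j).IsHomogeneous (e-2) := by
  have h1 : ∀ k, (ω k).IsHomogeneous ((e-2)+1) := by
    intro k
    have := hhom k
    rwa [show e - 1 = (e-2)+1 by omega] at this
  exact (pderiv_homog (h1 j) i).sub (pderiv_homog (h1 i) j)

/-! ### Homogeneity of the various ideals -/

lemma isHomog_J (hhom : ∀ i, (ω i).IsHomogeneous (e-1)) : IsHomogIdeal (Jideal ω) :=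
  isHomog_span (by rintro f ⟨i, rfl⟩; exact ⟨e-1, hhom i⟩)

lemma isHomog_C (he : 2 ≤ e) (hhom : ∀ i, (ω i).IsHomogeneous (e-1)) :
    IsHomogIdeal (Cdiff ω) :=
  isHomog_span (by rintro f ⟨i, j, rfl⟩; exact ⟨e-2, dcoeff_homog he hhom i j⟩)

lemma isHomog_I (he : 2 ≤ e) (hhom : ∀ i, (ω i).IsHomogeneous (e-1)) :
    IsHomogIdeal (Iideal ω) := by
  intro h hh d
  obtain ⟨η, hη⟩ : ∃ η : Fin (n+1) → PolyS n,
      ∀ i j, h * dcoeff ω i j = ω i * η j - ω j * η i := hh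
  have hd : ∀ i j, (dcoeff ω i j).IsHomogeneous (e-2) := dcoeff_homog he hhom
  cases d with
  | zero =>
    show ∃ ηg : Fin (n+1) → PolyS n, ∀ i j,
      homogeneousComponent 0 h * dcoeff ω i j = ω i * ηg j - ω j * ηg i
    refine ⟨0, fun i j => ?_⟩
    have k1 : homogeneousComponent (0 + (e-2)) (h * dcoeff ω i j)
        = homogeneousComponent 0 h * dcoeff ω i j := comp_mul (hd i j) h 0
    have k2 : homogeneousComponent (0 + (e-2)) (h * dcoeff ω i j) = 0 := by
      rw [hη i j, mul_comm (ω i) (η j), mul_comm (ω j) (η i), map_sub,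
        comp_mul_lt (hhom i) (η j) (by omega), comp_mul_lt (hhom j) (η i) (by omega), sub_zero]
    simp only [Pi.zero_apply, mul_zero, sub_zero]
    rw [← k1]
    exact k2
  | succ m =>
    show ∃ ηg : Fin (n+1) → PolyS n, ∀ i j,
      homogeneousComponent (m+1) h * dcoeff ω i j = ω i * ηg j - ω j * ηg i
    refine ⟨fun j => homogeneousComponent m (η j), fun i j => ?_⟩
    have k1 : homogeneousComponent ((m+1) + (e-2)) (h * dcoeff ω i j)
        = homogeneousComponent (m+1) h * dcoeff ω i j := comp_mul (hd i j) h (m+1)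
    have k2 : homogeneousComponent (m + (e-1)) (ω i * η j)
        = homogeneousComponent m (η j) * ω i := by
      rw [mul_comm]; exact comp_mul (hhom i) (η j) m
    have k3 : homogeneousComponent (m + (e-1)) (ω j * η i)
        = homogeneousComponent m (η i) * ω j := by
      rw [mul_comm]; exact comp_mul (hhom j) (η i) m
    have heq : (m+1) + (e-2) = m + (e-1) := by omega
    have k4 : homogeneousComponent (m+1) h * dcoeff ω i j
        = homogeneousComponent m (η j) * ω i - homogeneousComponent m (η i) * ω j := by
      rw [← k1, heq, hη i j, map_sub, k2, k3]
    linear_combination k4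

/-! ### Basic inclusions -/

lemma J_le_I (hint : Integrable ω) : Jideal ω ≤ Iideal ω := by
  rw [Jideal, Ideal.span_le]
  rintro f ⟨k, rfl⟩
  show ∃ ηg : Fin (n+1) → PolyS n, ∀ i j, ω k * dcoeff ω i j = ω i * ηg j - ω j * ηg i
  refine ⟨fun j => dcoeff ω k j, fun i j => ?_⟩
  have h := hint i j k
  simp only [dcoeff] at h ⊢
  linear_combination h

lemma mul_C_mem_J {h c : PolyS n} (hh : h ∈ Iideal ω) (hc : c ∈ Cdiff ω) :
    h * c ∈ Jideal ω := by
  have hle : Cdiff ω ≤ (Jideal ω).colon (Submodule.span (PolyS n) {h}) := by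
    rw [Cdiff, Ideal.span_le]
    rintro f ⟨i, j, rfl⟩
    rw [SetLike.mem_coe, Submodule.mem_colon_span_singleton]
    obtain ⟨η, hη⟩ : ∃ η : Fin (n+1) → PolyS n,
        ∀ i j, h * dcoeff ω i j = ω i * η j - ω j * η i := hh
    rw [smul_eq_mul, mul_comm, hη i j]
    exact sub_mem (Ideal.mul_mem_right _ _ (Ideal.subset_span ⟨i, rfl⟩))
      (Ideal.mul_mem_right _ _ (Ideal.subset_span ⟨j, rfl⟩))
  have h2 := hle hc
  rw [Submodule.mem_colon_span_singleton, smul_eq_mul, mul_comm] at h2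
  exact h2

lemma C_le_L : Cdiff ω ≤ Lideal ω := by
  have h1 : Cdiff ω ≤ (Jideal ω).colon ((Kideal ω ^ (0+1) : Ideal (PolyS n)) : Set (PolyS n)) := by
    intro c hc
    rw [Submodule.mem_colon]
    intro k hk
    rw [pow_one] at hk
    have h2 := Submodule.mem_colon.mp hk c hc
    rw [smul_eq_mul] at h2 ⊢
    rw [mul_comm]
    exact h2
  exact le_trans h1 (le_iSup (fun d => (Jideal ω).colon ((Kideal ω ^ (d+1) : Ideal (PolyS n)) : Set (PolyS n))) 0)

lemma J_le_L : Jideal ω ≤ Lideal ω := by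
  have h1 : Jideal ω ≤ (Jideal ω).colon ((Kideal ω ^ (0+1) : Ideal (PolyS n)) : Set (PolyS n)) := by
    intro f hf
    rw [Submodule.mem_colon]
    intro k _
    rw [smul_eq_mul]
    exact Ideal.mul_mem_right _ _ hf
  exact le_trans h1 (le_iSup (fun d => (Jideal ω).colon ((Kideal ω ^ (d+1) : Ideal (PolyS n)) : Set (PolyS n))) 0)

lemma mem_L_iff {f : PolyS n} :
    f ∈ Lideal ω ↔ ∃ d, f ∈ (Jideal ω).colon ((Kideal ω ^ (d+1) : Ideal (PolyS n)) : Set (PolyS n)) := by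
  rw [Lideal]
  exact Submodule.mem_iSup_of_directed _ (Monotone.directed_le (fun d d' hdd' =>
    Submodule.colon_mono le_rfl (SetLike.coe_subset_coe.mpr (Ideal.pow_le_pow_right (by omega)))))

lemma isHomog_K (he : 2 ≤ e) (hhom : ∀ i, (ω i).IsHomogeneous (e-1)) :
    IsHomogIdeal (Kideal ω) :=
  homogColon (isHomog_J hhom) (isHomog_C he hhom)

lemma isHomog_L (he : 2 ≤ e) (hhom : ∀ i, (ω i).IsHomogeneous (e-1)) :
    IsHomogIdeal (Lideal ω) := by
  intro f hf d
  obtain ⟨m, hm⟩ := mem_L_iff.mp hf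
  have h2 := homogColon (isHomog_J hhom) (homogPow (isHomog_K he hhom) (m+1)) f hm d
  exact mem_L_iff.mpr ⟨m, h2⟩

/-! ### Top cases -/

lemma L_eq_J_of_K_top (hK : Kideal ω = ⊤) : Lideal ω = Jideal ω := by
  apply le_antisymm _ J_le_L
  intro f hf
  obtain ⟨d, hd⟩ := mem_L_iff.mp hf
  rw [hK, Ideal.top_pow, Submodule.top_coe, Submodule.colon_univ] at hd
  exact hd

lemma I_eq_J_of_C_top (hint : Integrable ω) (hC : Cdiff ω = ⊤) : Iideal ω = Jideal ω := by
  apply le_antisymm _ (J_le_I hint)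
  intro h hh
  have h2 := mul_C_mem_J hh (show (1:PolyS n) ∈ Cdiff ω from hC ▸ Submodule.mem_top)
  rwa [mul_one] at h2

lemma K_top_of_KC (he : 2 ≤ e) (hhom : ∀ i, (ω i).IsHomogeneous (e-1))
    (hKC : Kideal ω ⊔ Cdiff ω = ⊤) (hC : Cdiff ω ≠ ⊤) : Kideal ω = ⊤ := by
  have h1 : (1 : PolyS n) ∈ Kideal ω ⊔ Cdiff ω := hKC ▸ Submodule.mem_top
  obtain ⟨k, hk, c, hc, hkc⟩ := Submodule.mem_sup.mp h1
  have hk0 := isHomog_K he hhom k hk 0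
  have hc0 := isHomog_C he hhom c hc 0
  rw [homogeneousComponent_zero] at hk0 hc0
  have hsum : (C (coeff 0 k) : PolyS n) + C (coeff 0 c) = 1 := by
    have h3 := congrArg (homogeneousComponent 0) hkc
    rw [map_add, homogeneousComponent_zero, homogeneousComponent_zero,
      homogeneousComponent_zero] at h3
    simpa using h3
  by_cases hcc : coeff 0 c = 0
  · rw [hcc, map_zero, add_zero] at hsum
    rw [hsum] at hk0
    exact (Ideal.eq_top_iff_one _).mpr hk0
  · exact absurd (Ideal.eq_top_of_isUnit_mem _ hc0
      (IsUnit.of_mul_eq_one (C (coeff 0 c)⁻¹) (by rw [← C_mul, mul_inv_cancel₀ hcc, C_1]))) hC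

/-! ### Saturation -/

lemma sat_step (hω : ω ≠ 0) (hht : heightGE (Jideal ω) 2) (hn : 2 ≤ n)
    (h : PolyS n) (hx : ∀ k, X k * h ∈ Iideal ω) : h ∈ Iideal ω := by
  classical
  have hx' : ∀ k, ∃ η : Fin (n+1) → PolyS n,
      ∀ i j, (X k * h) * dcoeff ω i j = ω i * η j - ω j * η i := fun k => hx k
  choose η hη using hx'
  have hdiv : ∀ k k', ∃ g, ∀ j, X k' * η k j - X k * η k' j = g * ω j := by
    intro k k'
    exact division hω hht (fun j => X k' * η k j - X k * η k' j) (fun i j => by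
      have h1 := hη k i j
      have h2 := hη k' i j
      linear_combination X k * h2 - X k' * h1)
  choose g hg using hdiv
  have hgsym : ∀ k k', g k k' = - g k' k := by
    intro k k'
    have hz : ∀ j, (g k k' + g k' k) * ω j = 0 := fun j => by
      linear_combination (-1 : PolyS n) * hg k k' j + (-1 : PolyS n) * hg k' k j
    exact eq_neg_of_add_eq_zero_left (cancel_omega hω hz)
  have hco : ∀ k k' k'', X k'' * g k k' + X k * g k' k'' + X k' * g k'' k = 0 := by
    intro k k' k''
    apply cancel_omega hω
    intro j
    linear_combination (-(X k'')) * hg k k' j + (-(X k)) * hg k' k'' j + (-(X k')) * hg k'' k j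
  obtain ⟨i0, i1, i2, h10, h20, h21⟩ : ∃ i0 i1 i2 : Fin (n+1), i1 ≠ i0 ∧ i2 ≠ i0 ∧ i2 ≠ i1 :=
    ⟨⟨0, by omega⟩, ⟨1, by omega⟩, ⟨2, by omega⟩, by simp [Fin.ext_iff], by simp [Fin.ext_iff],
      by simp [Fin.ext_iff]⟩
  set r : Fin (n+1) → PolyS n := fun k => subZ i0 (g i0 k) with hrdef
  have hasplit : ∀ k, ∃ aa, g i0 k = X i0 * aa + r k := by
    intro k
    obtain ⟨aa, haa⟩ := X_dvd_sub_subZ i0 (g i0 k)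
    exact ⟨aa, by linear_combination haa⟩
  choose a ha using hasplit
  have hkey : ∀ k k', X i0 * g k k' = X k * g i0 k' - X k' * g i0 k := by
    intro k k'
    have hcc := hco k k' i0
    rw [hgsym k' i0] at hcc
    linear_combination hcc
  have hrr : ∀ k k', k ≠ i0 → k' ≠ i0 → X k * r k' = X k' * r k := by
    intro k k' hk hk'
    have h1 : X k * r k' - X k' * r k = subZ i0 (X k * g i0 k' - X k' * g i0 k) := by
      rw [map_sub, map_mul, map_mul, subZ_X_ne _ _ hk, subZ_X_ne _ _ hk']
    have h2 : subZ i0 (X k * g i0 k' - X k' * g i0 k) = 0 := by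
      rw [← hkey k k', map_mul, subZ_X_self, zero_mul]
    have h3 := h1.trans h2
    linear_combination h3
  have hdvd1 : X i1 ∣ r i1 := by
    have h12 := hrr i1 i2 h10 h20
    have hdvd : X i1 ∣ X i2 * r i1 := ⟨r i2, h12.symm⟩
    rcases (prime_X i1).2.2 _ _ hdvd with hc | hc
    · exact absurd (X_dvd_X.mp hc) h21.symm
    · exact hc
  obtain ⟨s, hs⟩ := hdvd1
  have hrk : ∀ k, k ≠ i0 → r k = X k * s := by
    intro k hk
    by_cases hk1 : k = i1
    · rw [hk1, hs]
    · have h1 := hrr i1 k h10 hk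
      apply mul_left_cancel₀ (MvPolynomial.X_ne_zero i1)
      linear_combination h1 + X k * hs
  set cc : Fin (n+1) → PolyS n := fun k => if k = i0 then -s else a k with hccdef
  have hgzero : ∀ k, g k k = 0 := by
    intro k
    have h2 : (2 : PolyS n) * g k k = 0 := by linear_combination hgsym k k
    rcases mul_eq_zero.mp h2 with hcase | hcase
    · exact absurd hcase two_ne_zero
    · exact hcase
  have hcci0 : cc i0 = -s := by simp [hccdef]
  have hccne : ∀ k, k ≠ i0 → cc k = a k := by
    intro k hk
    simp [hccdef, hk]
  have hmain : ∀ k', k' ≠ i0 → g i0 k' = X i0 * cc k' - X k' * cc i0 := by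
    intro k' hk'
    rw [hccne k' hk', hcci0, ha k', hrk k' hk']
    ring
  have hgc : ∀ k k', g k k' = X k * cc k' - X k' * cc k := by
    intro k k'
    by_cases hk : k = i0 <;> by_cases hk' : k' = i0
    · subst hk; subst hk'; rw [hgzero]; ring
    · subst hk; rw [hmain k' hk']
    · rw [hk', hgsym k i0, hmain k hk]; ring
    · apply mul_left_cancel₀ (MvPolynomial.X_ne_zero i0)
      rw [hccne k hk, hccne k' hk', hkey k k', ha k, ha k', hrk k hk, hrk k' hk']
      ring
  have hcross : ∀ k k' j, X k' * (η k j + cc k * ω j) = X k * (η k' j + cc k' * ω j) := by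
    intro k k' j
    have h1 := hg k k' j
    rw [hgc k k'] at h1
    linear_combination h1
  have hth : ∀ j, ∃ t, η i0 j + cc i0 * ω j = X i0 * t := by
    intro j
    have h1 := hcross i0 i1 j
    have hdvd : X i0 ∣ X i1 * (η i0 j + cc i0 * ω j) := ⟨η i1 j + cc i1 * ω j, h1⟩
    rcases (prime_X i0).2.2 _ _ hdvd with hcase | hcase
    · exact absurd (X_dvd_X.mp hcase) (Ne.symm h10)
    · exact hcase
  choose θ hθ using hth
  show ∃ ηg : Fin (n+1) → PolyS n, ∀ i j, h * dcoeff ω i j = ω i * ηg j - ω j * ηg i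
  refine ⟨θ, fun i j => ?_⟩
  apply mul_left_cancel₀ (MvPolynomial.X_ne_zero i0)
  have h1 := hη i0 i j
  have e1 : η i0 j = X i0 * θ j - cc i0 * ω j := by linear_combination hθ j
  have e2 : η i0 i = X i0 * θ i - cc i0 * ω i := by linear_combination hθ i
  rw [e1, e2] at h1
  linear_combination h1

/-! ### Small n -/

lemma n0_false {ω : Fin 1 → PolyS 0} (hω : ω ≠ 0) (hdesc : ∑ i, X i * ω i = 0) : False := by
  have h0 : (X 0 : PolyS 0) * ω 0 = 0 := by rwa [Fin.sum_univ_one] at hdesc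
  have h1 : ω 0 = 0 := by
    rcases mul_eq_zero.mp h0 with hcase | hcase
    · exact absurd hcase (MvPolynomial.X_ne_zero _)
    · exact hcase
  apply hω
  funext i
  have h2 : i = 0 := Subsingleton.elim i 0
  rw [h2, h1]
  rfl

lemma n1_false {ω : Fin 2 → PolyS 1} (hω : ω ≠ 0) (hdesc : ∑ i, X i * ω i = 0)
    (hht : heightGE (Jideal ω) 2) (hCm : Cdiff ω ≤ irrelevant 1) : False := by
  have hsum : (X 0 : PolyS 1) * ω 0 + X 1 * ω 1 = 0 := by rwa [Fin.sum_univ_two] at hdesc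
  have hdvd : (X 0 : PolyS 1) ∣ X 1 * ω 1 := ⟨-ω 0, by linear_combination hsum⟩
  have hdvd1 : (X 0 : PolyS 1) ∣ ω 1 := by
    rcases (prime_X (0 : Fin 2)).2.2 _ _ hdvd with hc | hc
    · exact absurd (X_dvd_X.mp hc) (by decide)
    · exact hc
  obtain ⟨u, hu⟩ := hdvd1
  have hω0 : ω 0 = -(X 1 * u) := by
    apply mul_left_cancel₀ (MvPolynomial.X_ne_zero (0 : Fin 2))
    linear_combination hsum - X 1 * hu
  have hu0 : u ≠ 0 := by
    intro h0
    apply hω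
    funext i
    fin_cases i
    · show ω 0 = 0
      rw [hω0, h0, mul_zero, neg_zero]
    · show ω 1 = 0
      rw [hu, h0, mul_zero]
  by_cases hunit : IsUnit u
  · obtain ⟨v, hv⟩ := isUnit_iff_exists_inv.mp hunit
    have hccu : constantCoeff u ≠ 0 := by
      intro h0
      have h1 := congrArg constantCoeff hv
      rw [map_mul, h0, zero_mul, map_one] at h1
      exact zero_ne_one h1
    have hmem : dcoeff ω 0 1 ∈ Cdiff ω := Ideal.subset_span ⟨0, 1, rfl⟩
    have hcc0 : constantCoeff (dcoeff ω 0 1) = 0 := (mem_irrelevant_iff _).mp (hCm hmem)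
    have hval : constantCoeff (dcoeff ω 0 1) = 2 * constantCoeff u := by
      rw [dcoeff, hu, hω0]
      simp only [Derivation.leibniz, smul_eq_mul, map_sub, map_add, map_mul, map_neg,
        pderiv_X_self, pderiv_X_of_ne (show (0:Fin 2) ≠ 1 by decide),
        pderiv_X_of_ne (show (1:Fin 2) ≠ 0 by decide), mul_one, mul_zero,
        constantCoeff_X, map_one, zero_mul]
      ring
    rw [hval] at hcc0
    rcases mul_eq_zero.mp hcc0 with hcase | hcase
    · norm_num at hcase
    · exact hccu hcase
  · obtain ⟨d, hdirr, hddvd⟩ := WfDvdMonoid.exists_irreducible_factor hunit hu0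
    apply no_common_prime hht (UniqueFactorizationMonoid.irreducible_iff_prime.mp hdirr)
    intro j
    fin_cases j
    · show d ∣ ω 0
      exact hddvd.trans ⟨-(X 1), by rw [hω0]; ring⟩
    · show d ∣ ω 1
      exact hddvd.trans ⟨X 0, by rw [hu]; ring⟩

lemma I_eq_top_of_K_top (hω : ω ≠ 0) (he : 2 ≤ e) (hhom : ∀ i, (ω i).IsHomogeneous (e-1))
    (hdesc : ∑ i, X i * ω i = 0) (hht : heightGE (Jideal ω) 2)
    (hU : InU ω) (hK : Kideal ω = ⊤) (hC : Cdiff ω ≠ ⊤) : Iideal ω = ⊤ := by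
  have hCm : Cdiff ω ≤ irrelevant n := by
    by_contra hx
    exact hC (homog_eq_top_of_not_le_irrelevant (isHomog_C he hhom) hx)
  rcases Nat.lt_or_ge n 2 with hn | hn
  · exfalso
    rcases Nat.lt_or_ge n 1 with hn1 | hn1
    · have h0 : n = 0 := by omega
      subst h0
      exact n0_false hω hdesc
    · have h1 : n = 1 := by omega
      subst h1
      exact n1_false hω hdesc hht hCm
  · have hrad : irrelevant n ≤ (Iideal ω).radical := by
      apply rad_ge (isHomog_I he hhom)
      intro P hP hPh hIP
      by_cases hPm : P = irrelevant n
      · exact le_of_eq hPm.symm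
      · have hKP : ¬ Kideal ω ≤ P := fun hle => hP.ne_top (top_le_iff.mp (hK ▸ hle))
        exact absurd hIP (hU P ⟨hP, hPh, hPm⟩ hKP)
    obtain ⟨N, hN⟩ := Ideal.exists_radical_pow_le_of_fg (Iideal ω) (IsNoetherian.noetherian _)
    have hpow : irrelevant n ^ N ≤ Iideal ω := le_trans (Ideal.pow_right_mono hrad N) hN
    have hsat : ∀ N : ℕ, irrelevant n ^ N ≤ Iideal ω → (1 : PolyS n) ∈ Iideal ω := by
      intro N
      induction N with
      | zero =>
          intro hle
          exact hle (by rw [pow_zero, Ideal.one_eq_top]; exact Submodule.mem_top)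
      | succ N ih =>
          intro hle
          apply ih
          intro f hf
          apply sat_step hω hht hn f
          intro k
          apply hle
          rw [mul_comm (X k) f, pow_succ]
          exact Ideal.mul_mem_mul hf (X_mem_irrelevant k)
    exact (Ideal.eq_top_iff_one _).mpr (hsat N hpow)

/-! ### The isomorphism -/

lemma build_iso (hsup : Iideal ω ⊔ Lideal ω = ⊤) (hinf : Iideal ω ⊓ Lideal ω = Jideal ω) :
    ∃ f : (↥(Iideal ω) ⧸ (Submodule.comap (Iideal ω).subtype
        (Submodule.restrictScalars (PolyS n) (Jideal ω)))) ≃ₗ[PolyS n] (PolyS n ⧸ Lideal ω),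
      ∀ x : ↥(Iideal ω),
        f (Submodule.Quotient.mk x) = Ideal.Quotient.mk (Lideal ω) (x : PolyS n) := by
  set φ : ↥(Iideal ω) →ₗ[PolyS n] PolyS n ⧸ Lideal ω :=
    (Lideal ω).mkQ.comp (Iideal ω).subtype with hφ
  have hker : LinearMap.ker φ = Submodule.comap (Iideal ω).subtype
      (Submodule.restrictScalars (PolyS n) (Jideal ω)) := by
    ext x
    simp only [LinearMap.mem_ker, hφ, LinearMap.comp_apply, Submodule.mkQ_apply,
      Submodule.Quotient.mk_eq_zero, Submodule.mem_comap, Submodule.subtype_apply,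
      Submodule.restrictScalars_mem]
    constructor
    · intro hx
      rw [← hinf]
      exact ⟨x.2, hx⟩
    · intro hx
      exact J_le_L hx
  have hsurj : Function.Surjective φ := by
    intro y
    obtain ⟨s, rfl⟩ := Submodule.mkQ_surjective (Lideal ω) y
    have hs : s ∈ Iideal ω ⊔ Lideal ω := hsup ▸ Submodule.mem_top
    obtain ⟨aa, haa, bb, hbb, rfl⟩ := Submodule.mem_sup.mp hs
    refine ⟨⟨aa, haa⟩, ?_⟩
    simp only [hφ, LinearMap.comp_apply, Submodule.mkQ_apply, Submodule.subtype_apply]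
    rw [Submodule.Quotient.eq]
    have hne : aa - (aa + bb) = -bb := by ring
    rw [hne]
    exact (Lideal ω).neg_mem hbb
  refine ⟨(Submodule.quotEquivOfEq _ _ hker.symm).trans
    (LinearMap.quotKerEquivOfSurjective φ hsurj), fun x => ?_⟩
  rfl

/-! ### Dimension counting -/

lemma homogComp_mono {A B : Ideal (PolyS n)} (h : A ≤ B) (d : ℕ) :
    homogComp A d ≤ homogComp B d :=
  inf_le_inf (fun x hx => h hx) le_rfl

lemma homogComp_inf (A B : Ideal (PolyS n)) (d : ℕ) :
    homogComp (A ⊓ B) d = homogComp A d ⊓ homogComp B d := by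
  ext x
  simp only [homogComp, Submodule.mem_inf, Submodule.restrictScalars_mem, Submodule.mem_inf]
  tauto

lemma homogComp_sup {A B : Ideal (PolyS n)} (hA : IsHomogIdeal A) (hB : IsHomogIdeal B) (d : ℕ) :
    homogComp (A ⊔ B) d = homogComp A d ⊔ homogComp B d := by
  apply le_antisymm
  · intro x hx
    obtain ⟨hx1, hx2⟩ := hx
    obtain ⟨aa, haa, bb, hbb, rfl⟩ := Submodule.mem_sup.mp hx1
    have hxa : homogeneousComponent d aa ∈ homogComp A d :=
      ⟨hA aa haa d, homogeneousComponent_mem d aa⟩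
    have hxb : homogeneousComponent d bb ∈ homogComp B d :=
      ⟨hB bb hbb d, homogeneousComponent_mem d bb⟩
    have hsum : homogeneousComponent d aa + homogeneousComponent d bb = aa + bb := by
      rw [← map_add, homogeneousComponent_of_mem hx2, if_pos rfl]
    exact hsum ▸ Submodule.add_mem_sup hxa hxb
  · exact sup_le (homogComp_mono le_sup_left d) (homogComp_mono le_sup_right d)

lemma fd_homogComp (A : Ideal (PolyS n)) (d : ℕ) : FiniteDimensional ℂ (homogComp A d) := by
  have hle : homogComp A d ≤ restrictTotalDegree (Fin (n+1)) ℂ d := by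
    intro x hx
    rw [mem_restrictTotalDegree]
    exact ((mem_homogeneousSubmodule _ _).mp hx.2).totalDegree_le
  exact Submodule.finiteDimensional_of_le hle

lemma homogComp_top_le {A : Ideal (PolyS n)} {N d : ℕ} (hN : N ≤ d)
    (hA : irrelevant n ^ N ≤ A) : homogComp (⊤ : Ideal (PolyS n)) d ≤ homogComp A d := by
  intro x hx
  refine ⟨?_, hx.2⟩
  have h1 : x ∈ irrelevant n ^ d :=
    homog_mem_pow_irrelevant ((mem_homogeneousSubmodule _ _).mp hx.2)
  exact hA (Ideal.pow_le_pow_right hN h1)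

lemma eventually_comp_le {M J' : Ideal (PolyS n)} (hM : IsHomogIdeal M) (N : ℕ)
    (hcol : irrelevant n ^ N ≤ J'.colon M) :
    ∃ D, ∀ d, N + D ≤ d → homogComp M d ≤ homogComp J' d := by
  obtain ⟨T, hT⟩ := IsNoetherian.noetherian M
  refine ⟨T.sup totalDegree, fun d hd x hx => ?_⟩
  obtain ⟨hxM, hxd⟩ := hx
  refine ⟨?_, hxd⟩
  show x ∈ J'
  have hxM' : x ∈ Submodule.span (PolyS n) (T : Set (PolyS n)) := by
    rw [hT]; exact hxM
  obtain ⟨f, -, hf⟩ := Submodule.mem_span_finset.mp hxM'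
  have hx_eq : x = homogeneousComponent d x := by
    rw [homogeneousComponent_of_mem hxd, if_pos rfl]
  rw [hx_eq, ← hf, map_sum]
  apply Ideal.sum_mem
  intro t ht
  rw [smul_eq_mul]
  have hexp : f t * t = ∑ i ∈ Finset.range (t.totalDegree + 1),
      f t * homogeneousComponent i t := by
    rw [← Finset.mul_sum, sum_homogeneousComponent]
  rw [hexp, map_sum]
  apply Ideal.sum_mem
  intro i hi
  have hti : (homogeneousComponent i t).IsHomogeneous i := homogeneousComponent_isHomogeneous i t
  by_cases hid : i ≤ d
  · have hieq : d = (d - i) + i := by omega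
    have hcm : homogeneousComponent d (f t * homogeneousComponent i t)
        = homogeneousComponent (d - i) (f t) * homogeneousComponent i t := by
      conv_lhs => rw [hieq]
      exact comp_mul hti (f t) (d - i)
    rw [hcm]
    have h1 : homogeneousComponent (d-i) (f t) ∈ irrelevant n ^ (d - i) :=
      homog_mem_pow_irrelevant (homogeneousComponent_isHomogeneous _ _)
    have hit : i ≤ T.sup totalDegree := by
      have h2 : i ≤ t.totalDegree := by
        simp only [Finset.mem_range] at hi; omega
      exact le_trans h2 (Finset.le_sup ht)
    have h3 : homogeneousComponent (d-i) (f t) ∈ J'.colon M :=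
      hcol (Ideal.pow_le_pow_right (by omega) h1)
    have h4 : homogeneousComponent i t ∈ M := hM t (by rw [← hT]; exact Ideal.subset_span ht) i
    have h5 := Submodule.mem_colon.mp h3 _ h4
    rwa [smul_eq_mul] at h5
  · rw [comp_mul_lt hti _ (by omega)]
    exact zero_mem _

/-! ### Radical containments -/

lemma rad_IL (he : 2 ≤ e) (hhom : ∀ i, (ω i).IsHomogeneous (e-1)) (hU : InU ω)
    (hrad : irrelevant n ≤ (Kideal ω ⊔ Cdiff ω).radical) :
    irrelevant n ≤ (Iideal ω ⊔ Lideal ω).radical := by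
  apply rad_ge (homogSup (isHomog_I he hhom) (isHomog_L he hhom))
  intro P hP hPh hle
  by_cases hPm : P = irrelevant n
  · exact le_of_eq hPm.symm
  by_cases hKP : Kideal ω ≤ P
  · have h1 : Kideal ω ⊔ Cdiff ω ≤ P :=
      sup_le hKP (le_trans C_le_L (le_trans le_sup_right hle))
    calc irrelevant n ≤ (Kideal ω ⊔ Cdiff ω).radical := hrad
      _ ≤ P.radical := Ideal.radical_mono h1
      _ = P := hP.radical
  · exact absurd (le_trans le_sup_left hle) (hU P ⟨hP, hPh, hPm⟩ hKP)

lemma rad_JM (he : 2 ≤ e) (hhom : ∀ i, (ω i).IsHomogeneous (e-1)) (hU : InU ω)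
    (hrad : irrelevant n ≤ (Kideal ω ⊔ Cdiff ω).radical) :
    irrelevant n ≤ ((Jideal ω).colon (Iideal ω ⊓ Lideal ω)).radical := by
  apply rad_ge (homogColon (isHomog_J hhom) (homogInf (isHomog_I he hhom) (isHomog_L he hhom)))
  intro P hP hPh hle
  by_cases hPm : P = irrelevant n
  · exact le_of_eq hPm.symm
  by_cases hCP : Cdiff ω ≤ P
  · by_cases hKP : Kideal ω ≤ P
    · calc irrelevant n ≤ (Kideal ω ⊔ Cdiff ω).radical := hrad
        _ ≤ P.radical := Ideal.radical_mono (sup_le hKP hCP)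
        _ = P := hP.radical
    · exfalso
      obtain ⟨k, hkK, hkP⟩ := SetLike.not_le_iff_exists.mp hKP
      obtain ⟨T, hT⟩ := IsNoetherian.noetherian (Iideal ω ⊓ Lideal ω)
      have hchoice : ∀ t ∈ T, ∃ dd : ℕ, t ∈ (Jideal ω).colon ((Kideal ω ^ (dd+1) : Ideal (PolyS n)) : Set (PolyS n)) := by
        intro t ht
        have htM : t ∈ Iideal ω ⊓ Lideal ω := by rw [← hT]; exact Ideal.subset_span ht
        exact mem_L_iff.mp htM.2
      choose dd hdd using hchoice
      set D := T.attach.sup (fun t => dd t.1 t.2) with hDdef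
      have hcolon : k ^ (D+1) ∈ (Jideal ω).colon (Iideal ω ⊓ Lideal ω) := by
        rw [Submodule.mem_colon]
        intro p hp
        have hple : p ∈ Submodule.span (PolyS n) (T : Set (PolyS n)) := by
          rw [hT]; exact hp
        have hspan : Submodule.span (PolyS n) (T : Set (PolyS n))
            ≤ (Jideal ω).colon (Submodule.span (PolyS n) {k ^ (D+1)}) := by
          rw [Submodule.span_le]
          intro t ht
          rw [SetLike.mem_coe, Submodule.mem_colon_span_singleton]
          have h1 : k ^ (D+1) ∈ Kideal ω ^ (dd t ht + 1) := by
            have h3 : dd t ht ≤ D := Finset.le_sup (f := fun x : {x // x ∈ T} => dd x.1 x.2)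
              (Finset.mem_attach T ⟨t, ht⟩)
            have h2 : Kideal ω ^ (D+1) ≤ Kideal ω ^ (dd t ht + 1) :=
              Ideal.pow_le_pow_right (by omega)
            exact h2 (Ideal.pow_mem_pow hkK _)
          exact Submodule.mem_colon.mp (hdd t ht) _ h1
        have h4 := hspan hple
        rw [Submodule.mem_colon_span_singleton] at h4
        rw [smul_eq_mul] at h4 ⊢
        rw [mul_comm]
        exact h4
      exact hkP (hP.mem_of_pow_mem _ (hle hcolon))
  · exfalso
    obtain ⟨c, hcC, hcP⟩ := SetLike.not_le_iff_exists.mp hCP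
    apply hcP
    apply hle
    rw [Submodule.mem_colon]
    intro p hp
    rw [smul_eq_mul, mul_comm]
    exact mul_C_mem_J hp.1 hcC

end Stmt6Aux


/-- Let `ω ∈ 𝒰 ⊆ ℱ¹(ℙⁿ,e)`.
(i) If `K(ω) + 𝒞(dω) = S` then `I(ω) + L(ω) = S` and `I(ω) ∩ L(ω) = J(ω)`, and the
inclusion `I(ω) ⊆ S` induces an isomorphism of (graded) `S`-modules `I(ω)/J(ω) ≅ S/L(ω)`.
(ii) If `𝔪 ⊆ √(K(ω) + 𝒞(dω))`, then for all large degrees `d` the dimensions of the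
degree-`d` components of `I(ω)/J(ω)` and `S/L(ω)` coincide, i.e.
`dim I(ω)_d - dim J(ω)_d = dim S_d - dim L(ω)_d` (stated additively). -/
theorem stmt6 (n e : ℕ) (ω : Fin (n+1) → PolyS n) (hfol : IsFoliation n e ω)
    (hU : InU ω) :
    ((Kideal ω + Cdiff ω = ⊤) →
      (Iideal ω + Lideal ω = ⊤) ∧ (Iideal ω ⊓ Lideal ω = Jideal ω) ∧
      ∃ f : (↥(Iideal ω) ⧸
          (Submodule.comap (Iideal ω).subtype
            (Submodule.restrictScalars (PolyS n) (Jideal ω)))) ≃ₗ[PolyS n]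
          (PolyS n ⧸ Lideal ω),
        ∀ x : ↥(Iideal ω),
          f (Submodule.Quotient.mk x) = Ideal.Quotient.mk (Lideal ω) (x : PolyS n)) ∧
    ((irrelevant n ≤ (Kideal ω + Cdiff ω).radical) →
      ∃ N : ℕ, ∀ d : ℕ, N ≤ d →
        Module.finrank ℂ ↥(homogComp (Iideal ω) d) +
          Module.finrank ℂ ↥(homogComp (Lideal ω) d) =
        Module.finrank ℂ ↥(homogComp (⊤ : Ideal (PolyS n)) d) +
          Module.finrank ℂ ↥(homogComp (Jideal ω) d)) := by
  obtain ⟨hω, he, hhom, hint, hdesc, hht⟩ := hfol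
  constructor
  · intro hKC
    rw [Submodule.add_eq_sup] at hKC
    by_cases hC : Cdiff ω = ⊤
    · have hL : Lideal ω = ⊤ := eq_top_iff.mpr (hC ▸ Stmt6Aux.C_le_L)
      have hI : Iideal ω = Jideal ω := Stmt6Aux.I_eq_J_of_C_top hint hC
      have hsup : Iideal ω ⊔ Lideal ω = ⊤ := by rw [hL, sup_top_eq]
      have hinf : Iideal ω ⊓ Lideal ω = Jideal ω := by rw [hL, inf_top_eq, hI]
      exact ⟨by rw [Submodule.add_eq_sup, hsup], hinf, Stmt6Aux.build_iso hsup hinf⟩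
    · have hK : Kideal ω = ⊤ := Stmt6Aux.K_top_of_KC he hhom hKC hC
      have hL : Lideal ω = Jideal ω := Stmt6Aux.L_eq_J_of_K_top hK
      have hI : Iideal ω = ⊤ := Stmt6Aux.I_eq_top_of_K_top hω he hhom hdesc hht hU hK hC
      have hsup : Iideal ω ⊔ Lideal ω = ⊤ := by rw [hI, top_sup_eq]
      have hinf : Iideal ω ⊓ Lideal ω = Jideal ω := by rw [hI, hL, top_inf_eq]
      exact ⟨by rw [Submodule.add_eq_sup, hsup], hinf, Stmt6Aux.build_iso hsup hinf⟩
  · intro hrad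
    rw [Submodule.add_eq_sup] at hrad
    have hIhom := Stmt6Aux.isHomog_I (ω := ω) he hhom
    have hLhom := Stmt6Aux.isHomog_L (ω := ω) he hhom
    have hr1 := Stmt6Aux.rad_IL he hhom hU hrad
    obtain ⟨N1, hN1⟩ := Ideal.exists_radical_pow_le_of_fg (Iideal ω ⊔ Lideal ω)
      (IsNoetherian.noetherian _)
    have hIL : irrelevant n ^ N1 ≤ Iideal ω ⊔ Lideal ω :=
      le_trans (Ideal.pow_right_mono hr1 N1) hN1
    have hr2 := Stmt6Aux.rad_JM he hhom hU hrad
    obtain ⟨N2, hN2⟩ := Ideal.exists_radical_pow_le_of_fg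
      ((Jideal ω).colon (Iideal ω ⊓ Lideal ω)) (IsNoetherian.noetherian _)
    have hJM : irrelevant n ^ N2 ≤ (Jideal ω).colon (Iideal ω ⊓ Lideal ω) :=
      le_trans (Ideal.pow_right_mono hr2 N2) hN2
    obtain ⟨D, hD⟩ := Stmt6Aux.eventually_comp_le (Stmt6Aux.homogInf hIhom hLhom) N2 hJM
    refine ⟨N1 + (N2 + D), fun d hd => ?_⟩
    haveI := Stmt6Aux.fd_homogComp (Iideal ω) d
    haveI := Stmt6Aux.fd_homogComp (Lideal ω) d
    have hsup_eq : homogComp (Iideal ω) d ⊔ homogComp (Lideal ω) d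
        = homogComp (⊤ : Ideal (PolyS n)) d := by
      rw [← Stmt6Aux.homogComp_sup hIhom hLhom]
      exact le_antisymm (Stmt6Aux.homogComp_mono le_top d)
        (Stmt6Aux.homogComp_top_le (by omega) hIL)
    have hinf_eq : homogComp (Iideal ω) d ⊓ homogComp (Lideal ω) d
        = homogComp (Jideal ω) d := by
      rw [← Stmt6Aux.homogComp_inf]
      apply le_antisymm
      · exact hD d (by omega)
      · exact Stmt6Aux.homogComp_mono (le_inf (Stmt6Aux.J_le_I hint) Stmt6Aux.J_le_L) d
    rw [← Submodule.finrank_sup_add_finrank_inf_eq (homogComp (Iideal ω) d)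
      (homogComp (Lideal ω) d), hsup_eq, hinf_eq]

end
end

section
/- For every ω ∈ ℱ¹(ℙⁿ,e) one has the chain of inclusions of ideals 𝒞(ω) = J(ω) ⊆ I(ω) ⊆ K(ω); that is, the ideal of coefficients of ω equals the singular ideal, the singular ideal is contained in the unfoldings ideal, and the unfoldings ideal is contained in the Kupka ideal. -/
open MvPolynomial

noncomputable section

/-- For every `ω ∈ ℱ¹(ℙⁿ,e)` one has the chain of inclusions
`𝒞(ω) = J(ω) ⊆ I(ω) ⊆ K(ω)`. -/
theorem stmt7 (n e : ℕ) (ω : Fin (n+1) → PolyS n) (hfol : IsFoliation n e ω) :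
    Ideal.span (Set.range ω) = Jideal ω ∧ Jideal ω ≤ Iideal ω ∧ Iideal ω ≤ Kideal ω := by
  obtain ⟨-, -, -, hint, -, -⟩ := hfol
  refine ⟨rfl, ?_, ?_⟩
  · rw [Jideal, Ideal.span_le]
    rintro _ ⟨k, rfl⟩
    refine ⟨fun m => dcoeff ω k m, fun i j => ?_⟩
    have h := hint i j k
    simp only [dcoeff] at h ⊢
    linear_combination h
  · rintro h ⟨η, hη⟩
    rw [Kideal, Submodule.mem_colon]
    intro g hg
    induction hg using Submodule.span_induction with
    | mem g hg =>
        obtain ⟨i, j, rfl⟩ := hg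
        rw [smul_eq_mul, hη i j]
        exact sub_mem (Ideal.mul_mem_right _ _ (Ideal.subset_span ⟨i, rfl⟩))
          (Ideal.mul_mem_right _ _ (Ideal.subset_span ⟨j, rfl⟩))
    | zero => simp
    | add a b _ _ ha hb => simpa [smul_add, mul_add] using add_mem ha hb
    | smul c a _ ha =>
        rw [smul_comm]
        exact Submodule.smul_mem _ _ ha

end
end

section
/- Let ω ∈ ℱ¹(ℙⁿ,e) and let a ≥ 1 be an integer. Consider the ℂ-vector space V_a := {(h,η) : h ∈ S homogeneous of degree a, η ∈ Ω¹_S with all coefficients homogeneous of degree a−1, and a·h·dω = e·ω ∧ (η − dh)}, and its subspace W_a := {(0, f·ω) : f ∈ S homogeneous of degree a−e}. Then the projection (h,η) ↦ h induces a well-defined ℂ-linear isomorphism from V_a / W_a onto the degree-a homogeneous component I(ω)_a of the unfoldings ideal I(ω). -/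
open MvPolynomial

noncomputable section

/-- The space `V_a` of graded unfolding data of degree `a`:
pairs `(h, η)` with `h` homogeneous of degree `a`, the coefficients of `η` homogeneous
of degree `a-1`, and `a·h·dω = e·ω ∧ (η − dh)`. -/
def Vsub {n : ℕ} (ω : Fin (n+1) → PolyS n) (e a : ℕ) :
    Submodule ℂ (PolyS n × (Fin (n+1) → PolyS n)) where
  carrier := {p | p.1.IsHomogeneous a ∧ (∀ i, (p.2 i).IsHomogeneous (a-1)) ∧
    ∀ i j, (a : PolyS n) * p.1 * dcoeff ω i j =
      (e : PolyS n) * (ω i * (p.2 j - pderiv j p.1) - ω j * (p.2 i - pderiv i p.1))}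
  add_mem' := by
    rintro ⟨h₁, η₁⟩ ⟨h₂, η₂⟩ ⟨hh₁, hη₁, heq₁⟩ ⟨hh₂, hη₂, heq₂⟩
    refine ⟨hh₁.add hh₂, fun i => (hη₁ i).add (hη₂ i), fun i j => ?_⟩
    simp only [Prod.fst_add, Prod.snd_add, Pi.add_apply, map_add]
    linear_combination heq₁ i j + heq₂ i j
  zero_mem' := by
    refine ⟨isHomogeneous_zero _ _ _, fun i => isHomogeneous_zero _ _ _, fun i j => by simp⟩
  smul_mem' := by
    rintro c ⟨h, η⟩ ⟨hh, hη, heq⟩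
    refine ⟨?_, fun i => ?_, fun i j => ?_⟩
    · exact (mem_homogeneousSubmodule _ _).1
        ((homogeneousSubmodule (Fin (n+1)) ℂ a).smul_mem c
          ((mem_homogeneousSubmodule _ _).2 hh))
    · exact (mem_homogeneousSubmodule _ _).1
        ((homogeneousSubmodule (Fin (n+1)) ℂ (a-1)).smul_mem c
          ((mem_homogeneousSubmodule _ _).2 (hη i)))
    · simp only [Prod.smul_fst, Prod.smul_snd, Pi.smul_apply, map_smul]
      simp only [MvPolynomial.smul_eq_C_mul, pderiv_C_mul]
      linear_combination (C c : PolyS n) * heq i j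

/-- The subspace `W_a = {(0, f·ω) : f homogeneous of degree a-e}` (with `f = 0` forced
when `a < e`, since then there is no nonzero homogeneous polynomial of degree `a-e`). -/
def Wsub {n : ℕ} (ω : Fin (n+1) → PolyS n) (e a : ℕ) :
    Submodule ℂ (PolyS n × (Fin (n+1) → PolyS n)) where
  carrier := {p | ∃ f : PolyS n, p = (0, f • ω) ∧
    ((e ≤ a ∧ f.IsHomogeneous (a - e)) ∨ f = 0)}
  add_mem' := by
    rintro p q ⟨f, rfl, hf⟩ ⟨g, rfl, hg⟩
    refine ⟨f + g, by rw [Prod.mk_add_mk, add_zero, add_smul], ?_⟩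
    rcases hf with ⟨hea, hf⟩ | rfl
    · rcases hg with ⟨-, hg⟩ | rfl
      · exact Or.inl ⟨hea, hf.add hg⟩
      · simpa using Or.inl ⟨hea, hf⟩
    · simpa using hg
  zero_mem' := ⟨0, by simp; rfl, Or.inr rfl⟩
  smul_mem' := by
    rintro c p ⟨f, rfl, hf⟩
    refine ⟨c • f, by rw [Prod.smul_mk, smul_zero, smul_assoc], ?_⟩
    rcases hf with ⟨hea, hf⟩ | rfl
    · exact Or.inl ⟨hea, (mem_homogeneousSubmodule _ _).1
        ((homogeneousSubmodule (Fin (n+1)) ℂ (a-e)).smul_mem c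
          ((mem_homogeneousSubmodule _ _).2 hf))⟩
    · exact Or.inr (by simp)


lemma aux_pderiv_homog {n : ℕ} {p : PolyS n} {m : ℕ} (hp : p.IsHomogeneous m)
    (i : Fin (n+1)) : (pderiv i p).IsHomogeneous (m-1) := by
  rw [← support_sum_monomial_coeff p]
  rw [map_sum]
  apply IsHomogeneous.sum
  intro d hd
  rw [pderiv_monomial]
  by_cases hdi : d i = 0
  · rw [hdi]; rw [Nat.cast_zero, mul_zero, monomial_zero]
    exact isHomogeneous_zero _ _ _
  · apply isHomogeneous_monomial
    have hdeg : Finsupp.degree d = m := by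
      rw [Finsupp.degree_eq_weight_one]; exact hp (mem_support_iff.mp hd)
    have h1 : d - Finsupp.single i 1 + Finsupp.single i 1 = d := by
      ext j
      by_cases hj : j = i
      · subst hj; simp; omega
      · simp [Finsupp.single_apply, hj, Ne.symm hj]
    have h2 : Finsupp.degree (d - Finsupp.single i 1) + Finsupp.degree (Finsupp.single i 1) = m := by
      rw [Finsupp.degree_eq_weight_one] at hdeg ⊢
      rw [← map_add, h1, hdeg]
    have h3 : Finsupp.degree (Finsupp.single i 1) = 1 := by
      exact Finsupp.degree_single i 1
    omega

lemma aux_hc_mul {n : ℕ} {p : PolyS n} {m : ℕ} (hp : p.IsHomogeneous m) (q : PolyS n) (d : ℕ) :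
    homogeneousComponent (m+d) (p*q) = p * homogeneousComponent d q := by
  conv_lhs => rw [← sum_homogeneousComponent q]
  rw [Finset.mul_sum, map_sum]
  rw [Finset.sum_eq_single d]
  · have : p * homogeneousComponent d q ∈ homogeneousSubmodule (Fin (n+1)) ℂ (m+d) :=
      hp.mul (homogeneousComponent_isHomogeneous d q)
    rw [homogeneousComponent_of_mem this, if_pos rfl]
  · intro b _ hbd
    have : p * homogeneousComponent b q ∈ homogeneousSubmodule (Fin (n+1)) ℂ (m+b) :=
      hp.mul (homogeneousComponent_isHomogeneous b q)
    rw [homogeneousComponent_of_mem this, if_neg (by omega)]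
  · intro hd
    rw [homogeneousComponent_eq_zero d q (by simpa using hd), mul_zero, map_zero]

lemma aux_prime_bot {n : ℕ} {π : PolyS n} (hπ : Prime π) {q : Ideal (PolyS n)}
    (hq : q.IsPrime) (hlt : q < Ideal.span {π}) : q = ⊥ := by
  have hπq : π ∉ q := by
    intro hmem
    have : Ideal.span {π} ≤ q := (Ideal.span_singleton_le_iff_mem q).mpr hmem
    exact absurd (le_antisymm hlt.le this) hlt.ne
  have key : ∀ k : ℕ, ∀ x ∈ q, π ^ k ∣ x := by
    intro k
    induction k with
    | zero => intro x _; simp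
    | succ k ih =>
      intro x hx
      have hxspan : x ∈ Ideal.span {π} := hlt.le hx
      obtain ⟨y, rfl⟩ := Ideal.mem_span_singleton'.mp hxspan
      have hyq : y ∈ q := by
        rcases hq.mem_or_mem (by rwa [mul_comm] at hx : π * y ∈ q) with h | h
        · exact absurd h hπq
        · exact h
      obtain ⟨z, rfl⟩ := ih y hyq
      exact ⟨z, by ring⟩
  rw [Submodule.eq_bot_iff]
  intro x hx
  by_contra hx0
  have hfin : FiniteMultiplicity π x :=
    FiniteMultiplicity.of_not_isUnit hπ.not_isUnit hx0
  obtain ⟨k, hk⟩ := hfin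
  exact hk (key (k+1) x hx)

lemma aux_ht {n : ℕ} {π : PolyS n} (hπ : Prime π) :
    ¬ (2:ℕ∞) ≤ Order.height
      (⟨Ideal.span {π}, (Ideal.span_singleton_prime hπ.ne_zero).mpr hπ⟩ :
        PrimeSpectrum (PolyS n)) := by
  intro h
  obtain ⟨p, hlast, hlen⟩ := Order.exists_series_of_le_height _ (by exact_mod_cast h :
    ((2:ℕ):ℕ∞) ≤ Order.height (⟨Ideal.span {π}, (Ideal.span_singleton_prime hπ.ne_zero).mpr hπ⟩ :
      PrimeSpectrum (PolyS n)))
  have h12 : p ⟨1, by omega⟩ < p ⟨2, by omega⟩ := p.strictMono (by simp [Fin.lt_def])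
  have h01 : p ⟨0, by omega⟩ < p ⟨1, by omega⟩ := p.strictMono (by simp [Fin.lt_def])
  have hlast2 : p ⟨2, by omega⟩ =
      (⟨Ideal.span {π}, (Ideal.span_singleton_prime hπ.ne_zero).mpr hπ⟩ :
        PrimeSpectrum (PolyS n)) := by
    rw [← hlast]; congr 1
    simp [RelSeries.last, Fin.last]; omega
  rw [hlast2] at h12
  have hbot : (p ⟨1, by omega⟩).asIdeal = ⊥ :=
    aux_prime_bot hπ (p ⟨1, by omega⟩).isPrime
      (by rw [← PrimeSpectrum.asIdeal_lt_asIdeal] at h12; exact h12)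
  have := (PrimeSpectrum.asIdeal_lt_asIdeal _ _).mpr h01
  rw [hbot] at this
  exact not_lt_bot this

lemma aux_div {n : ℕ} (ω η : Fin (n+1) → PolyS n) (hω : ω ≠ 0)
    (hht : ∀ p : PrimeSpectrum (PolyS n), Jideal ω ≤ p.asIdeal → (2:ℕ∞) ≤ Order.height p)
    (hcomm : ∀ i j, η i * ω j = η j * ω i) :
    ∃ f : PolyS n, ∀ i, η i = f * ω i := by
  obtain ⟨j₀, hj₀⟩ := Function.ne_iff.mp hω
  simp only [Pi.zero_apply] at hj₀
  obtain ⟨q', p', c', hrel, hcq, hcp⟩ :=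
    UniqueFactorizationMonoid.exists_reduced_factors (ω j₀) hj₀ (η j₀)
  have hc0 : c' ≠ 0 := fun h => hj₀ (by rw [← hcq, h, zero_mul])
  have key : ∀ i, q' * η i = p' * ω i := by
    intro i
    apply mul_left_cancel₀ hc0
    have := hcomm i j₀
    rw [← hcq, ← hcp] at this
    linear_combination this
  have hdvd : ∀ i, q' ∣ ω i := by
    intro i
    exact hrel.dvd_of_dvd_mul_left ⟨η i, (key i).symm⟩
  have hq'unit : IsUnit q' := by
    by_contra hnu
    have hq0 : q' ≠ 0 := fun h => hj₀ (by rw [← hcq, h, mul_zero])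
    obtain ⟨π, hirr, hπq⟩ := WfDvdMonoid.exists_irreducible_factor hnu hq0
    have hπ : Prime π := (UniqueFactorizationMonoid.irreducible_iff_prime).mp hirr
    have hle : Jideal ω ≤ Ideal.span {π} := by
      rw [Jideal, Ideal.span_le]
      rintro _ ⟨i, rfl⟩
      exact Ideal.mem_span_singleton.mpr (hπq.trans (hdvd i))
    exact aux_ht hπ (hht ⟨Ideal.span {π}, (Ideal.span_singleton_prime hπ.ne_zero).mpr hπ⟩ hle)
  obtain ⟨u, hu⟩ := hq'unit
  refine ⟨(↑u⁻¹ : PolyS n) * p', fun i => ?_⟩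
  have := key i
  rw [← hu] at this
  calc η i = (↑u⁻¹ : PolyS n) * (↑u * η i) := by
        rw [← mul_assoc, Units.inv_mul, one_mul]
    _ = (↑u⁻¹ : PolyS n) * p' * ω i := by rw [this, mul_assoc]

lemma aux_f_homog {n : ℕ} {f g : PolyS n} {m k : ℕ} (hg : g.IsHomogeneous m)
    (hfg : (f * g).IsHomogeneous k) (hf0 : f ≠ 0) (hg0 : g ≠ 0) :
    m ≤ k ∧ f.IsHomogeneous (k - m) := by
  have claim0 : ∀ d, m + d ≠ k → homogeneousComponent d f = 0 := by
    intro d hd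
    have h1 : homogeneousComponent (m + d) (g * f) = g * homogeneousComponent d f :=
      aux_hc_mul hg f d
    have h2 : homogeneousComponent (m + d) (g * f) = 0 := by
      have hmem : g * f ∈ homogeneousSubmodule (Fin (n+1)) ℂ k := by
        rw [mul_comm]; exact hfg
      rw [homogeneousComponent_of_mem hmem, if_neg hd]
    rw [h2] at h1
    rcases mul_eq_zero.mp h1.symm with h | h
    · exact absurd h hg0
    · exact h
  have hex : ∃ d₀, homogeneousComponent d₀ f ≠ 0 := by
    by_contra hall
    push_neg at hall
    apply hf0
    rw [← sum_homogeneousComponent f]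
    exact Finset.sum_eq_zero fun d _ => hall d
  obtain ⟨d₀, hd₀⟩ := hex
  have hmd : m + d₀ = k := by
    by_contra hne
    exact hd₀ (claim0 d₀ hne)
  have hfeq : f = homogeneousComponent d₀ f := by
    conv_lhs => rw [← sum_homogeneousComponent f]
    rw [Finset.sum_eq_single d₀]
    · intro b _ hb
      exact claim0 b (fun hc => hb (by omega))
    · intro hmem
      exact homogeneousComponent_eq_zero _ _ (by simpa using hmem)
  refine ⟨by omega, ?_⟩
  have : d₀ = k - m := by omega
  rw [hfeq, this]
  exact homogeneousComponent_isHomogeneous _ _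

/-- For `ω ∈ ℱ¹(ℙⁿ,e)` and `a ≥ 1`, the projection `(h,η) ↦ h` induces a
`ℂ`-linear isomorphism `V_a / W_a ≅ I(ω)_a`, the degree-`a` homogeneous component of the
unfoldings ideal. -/
theorem stmt8 (n e a : ℕ) (ω : Fin (n+1) → PolyS n) (hfol : IsFoliation n e ω)
    (ha : 1 ≤ a) :
    ∃ f : (↥(Vsub ω e a) ⧸ (Wsub ω e a).comap (Vsub ω e a).subtype) ≃ₗ[ℂ]
        ↥(homogComp (Iideal ω) a),
      ∀ v : ↥(Vsub ω e a),
        (f (Submodule.Quotient.mk v) : PolyS n) = (v : PolyS n × (Fin (n+1) → PolyS n)).1 := by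
  obtain ⟨hω0, he2, hωhom, hint, heuler, hht⟩ := hfol
  have ha0 : (a:ℂ) ≠ 0 := Nat.cast_ne_zero.mpr (by omega)
  have he0 : (e:ℂ) ≠ 0 := Nat.cast_ne_zero.mpr (by omega)
  have hAc : ((a:ℕ) : PolyS n) = C ((a:ℕ):ℂ) := (map_natCast (C : ℂ →+* PolyS n) a).symm
  have hEc : ((e:ℕ) : PolyS n) = C ((e:ℕ):ℂ) := (map_natCast (C : ℂ →+* PolyS n) e).symm
  -- membership of the first component in the unfoldings ideal
  have hmem : ∀ v : ↥(Vsub ω e a),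
      ((v : PolyS n × (Fin (n+1) → PolyS n)).1) ∈ homogComp (Iideal ω) a := by
    intro v
    obtain ⟨hh, hη, heq⟩ := v.2
    refine Submodule.mem_inf.mpr ⟨?_, hh⟩
    show (v : PolyS n × (Fin (n+1) → PolyS n)).1 ∈ Iideal ω
    refine ⟨fun i => C ((e:ℂ) * (a:ℂ)⁻¹) *
      ((v : PolyS n × (Fin (n+1) → PolyS n)).2 i -
        pderiv i (v : PolyS n × (Fin (n+1) → PolyS n)).1), fun i j => ?_⟩
    have key := heq i j
    rw [hAc, hEc] at key
    have hc : (C ((a:ℕ):ℂ) : PolyS n) * C ((e:ℂ) * (a:ℂ)⁻¹) = C ((e:ℕ):ℂ) := by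
      rw [← map_mul]; congr 1; field_simp
    apply mul_left_cancel₀ (show (C ((a:ℕ):ℂ) : PolyS n) ≠ 0 by
      simpa using ha0)
    set h := (v : PolyS n × (Fin (n+1) → PolyS n)).1
    set η := (v : PolyS n × (Fin (n+1) → PolyS n)).2
    linear_combination key - (ω i * (η j - pderiv j h) - ω j * (η i - pderiv i h)) * hc
  -- the linear map
  let φ : ↥(Vsub ω e a) →ₗ[ℂ] ↥(homogComp (Iideal ω) a) :=
    ((LinearMap.fst ℂ (PolyS n) (Fin (n+1) → PolyS n)).comp
      (Vsub ω e a).subtype).codRestrict _ hmem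
  have hφ : ∀ v : ↥(Vsub ω e a),
      (φ v : PolyS n) = (v : PolyS n × (Fin (n+1) → PolyS n)).1 := fun v => rfl
  -- kernel
  have hker : LinearMap.ker φ = (Wsub ω e a).comap (Vsub ω e a).subtype := by
    ext v
    constructor
    · intro hv
      have hv1 : (v : PolyS n × (Fin (n+1) → PolyS n)).1 = 0 := by
        have := LinearMap.mem_ker.mp hv
        have := congrArg (fun x : ↥(homogComp (Iideal ω) a) => (x : PolyS n)) this
        simpa [hφ] using this
      obtain ⟨hh, hη, heq⟩ := v.2
      set η := (v : PolyS n × (Fin (n+1) → PolyS n)).2 with hηdef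
      have hcomm : ∀ i j, η i * ω j = η j * ω i := by
        intro i j
        have key := heq i j
        rw [hv1, hEc] at key
        simp only [mul_zero, zero_mul, map_zero, sub_zero] at key
        have : (ω i * η j - ω j * η i) = 0 := by
          rcases mul_eq_zero.mp (show (C ((e:ℕ):ℂ) : PolyS n) *
              (ω i * η j - ω j * η i) = 0 by linear_combination -key) with h | h
          · exact absurd h (by simpa using he0)
          · exact h
        linear_combination -this
      obtain ⟨f, hf⟩ := aux_div ω η hω0 (fun p hp => by exact_mod_cast hht p hp) hcomm
      refine Submodule.mem_comap.mpr ⟨f, ?_, ?_⟩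
      · refine Prod.ext hv1 ?_
        funext i
        simp only [Pi.smul_apply, smul_eq_mul]
        exact hf i
      · by_cases hf0 : f = 0
        · exact Or.inr hf0
        · obtain ⟨j₀, hj₀⟩ := Function.ne_iff.mp hω0
          simp only [Pi.zero_apply] at hj₀
          have hfg : (f * ω j₀).IsHomogeneous (a-1) := by
            rw [← hf j₀]; exact hη j₀
          obtain ⟨hle, hfh⟩ := aux_f_homog (hωhom j₀) hfg hf0 hj₀
          refine Or.inl ⟨by omega, ?_⟩
          have : (a-1) - (e-1) = a - e := by omega
          rwa [this] at hfh
    · rintro ⟨f, hvf, -⟩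
      refine LinearMap.mem_ker.mpr (Subtype.ext ?_)
      show (v : PolyS n × (Fin (n+1) → PolyS n)).1 = 0
      exact congrArg Prod.fst hvf
  -- surjectivity
  have hsurj : Function.Surjective φ := by
    intro x
    obtain ⟨hxI, hxhom⟩ := Submodule.mem_inf.mp x.2
    have hxI' : (x : PolyS n) ∈ Iideal ω := hxI
    obtain ⟨ξ, hξ⟩ := hxI'
    set ξ' : Fin (n+1) → PolyS n := fun i => homogeneousComponent (a-1) (ξ i) with hξ'def
    have hxhom' : (x : PolyS n).IsHomogeneous a := hxhom
    have hkey : ∀ i j, (x : PolyS n) * dcoeff ω i j = ω i * ξ' j - ω j * ξ' i := by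
      intro i j
      have := congrArg (homogeneousComponent (a+e-2)) (hξ i j)
      have hdc : (dcoeff ω i j).IsHomogeneous (e-2) := by
        have h1 := aux_pderiv_homog (hωhom j) i
        have h2 := aux_pderiv_homog (hωhom i) j
        have he1 : (e-1) - 1 = e - 2 := by omega
        rw [he1] at h1 h2
        exact (Submodule.sub_mem _ ((mem_homogeneousSubmodule _ _).mpr h1)
          ((mem_homogeneousSubmodule _ _).mpr h2) :
          (pderiv i (ω j) - pderiv j (ω i)) ∈ homogeneousSubmodule (Fin (n+1)) ℂ (e-2))
      have hlhs : homogeneousComponent (a+e-2) ((x : PolyS n) * dcoeff ω i j) =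
          (x : PolyS n) * dcoeff ω i j := by
        have hm : ((x : PolyS n) * dcoeff ω i j).IsHomogeneous (a+e-2) := by
          have := hxhom'.mul hdc
          have hnat : a + (e-2) = a+e-2 := by omega
          rwa [hnat] at this
        rw [homogeneousComponent_of_mem hm, if_pos rfl]
      have hnat2 : (e-1) + (a-1) = a+e-2 := by omega
      have hr1 : homogeneousComponent (a+e-2) (ω i * ξ j) = ω i * ξ' j := by
        rw [← hnat2]; exact aux_hc_mul (hωhom i) (ξ j) (a-1)
      have hr2 : homogeneousComponent (a+e-2) (ω j * ξ i) = ω j * ξ' i := by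
        rw [← hnat2]; exact aux_hc_mul (hωhom j) (ξ i) (a-1)
      rw [hlhs, map_sub, hr1, hr2] at this
      exact this
    refine ⟨⟨((x : PolyS n), fun i => C ((a:ℂ) * (e:ℂ)⁻¹) * ξ' i + pderiv i (x : PolyS n)),
      ⟨hxhom', fun i => ?_, fun i j => ?_⟩⟩, Subtype.ext rfl⟩
    · refine IsHomogeneous.add ?_ (aux_pderiv_homog hxhom' i)
      have := Submodule.smul_mem (homogeneousSubmodule (Fin (n+1)) ℂ (a-1))
        ((a:ℂ) * (e:ℂ)⁻¹) ((mem_homogeneousSubmodule _ _).mpr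
        (homogeneousComponent_isHomogeneous (a-1) (ξ i)))
      rw [MvPolynomial.smul_eq_C_mul] at this
      exact (mem_homogeneousSubmodule _ _).mp this
    · have hc2 : (C ((e:ℕ):ℂ) : PolyS n) * C ((a:ℂ) * (e:ℂ)⁻¹) = C ((a:ℕ):ℂ) := by
        rw [← map_mul]; congr 1; field_simp
      rw [hAc, hEc]
      linear_combination C ((a:ℕ):ℂ) * hkey i j - (ω i * ξ' j - ω j * ξ' i) * hc2
  -- assemble the equivalence
  refine ⟨(Submodule.quotEquivOfEq _ _ hker.symm).trans (φ.quotKerEquivOfSurjective hsurj),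
    fun v => ?_⟩
  have h1 : (Submodule.quotEquivOfEq ((Wsub ω e a).comap (Vsub ω e a).subtype)
      (LinearMap.ker φ) hker.symm) (Submodule.Quotient.mk v) = Submodule.Quotient.mk v :=
    Submodule.quotEquivOfEq_mk _ _ _ _
  rw [LinearEquiv.trans_apply, h1]
  have h2 : (φ.quotKerEquivOfSurjective hsurj) (Submodule.Quotient.mk v) = φ v := by
    rfl
  rw [h2, hφ]

end
end

section
/- Let ω ∈ ℱ¹(ℙⁿ,e). Then 1 ∉ I(ω); that is, there is no 1-form η ∈ Ω¹_S with dω = ω ∧ η. Equivalently, the class of dω in the second Koszul homology H²(ω) := ker(ω∧ : Ω²_S → Ω³_S)/(ω ∧ Ω¹_S) is nonzero, and the unfoldings ideal I(ω) is a proper ideal of S. -/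
open MvPolynomial

noncomputable section

lemma euler_id {n d : ℕ} {f : PolyS n} (hf : f.IsHomogeneous d) :
    ∑ i, X i * pderiv i f = (d : ℂ) • f := by
  conv_lhs => rw [f.as_sum]
  conv_rhs => rw [f.as_sum]
  simp only [map_sum, Finset.mul_sum, Finset.smul_sum]
  rw [Finset.sum_comm]
  refine Finset.sum_congr rfl fun s hs => ?_
  have hcs : coeff s f ≠ 0 := MvPolynomial.mem_support_iff.mp hs
  have hdeg : ∑ i, s i = d := by
    have := hf hcs
    rw [Finsupp.weight_apply] at this
    rw [← this, Finsupp.sum_fintype]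
    · simp
    · intro i; simp
  have key : ∀ i : Fin (n+1), X i * pderiv i (monomial s (coeff s f))
      = monomial s ((s i : ℂ) * coeff s f) := by
    intro i
    rw [pderiv_monomial]
    by_cases h : s i = 0
    · simp [h]
    · rw [X, monomial_mul, mul_comm (coeff s f)]
      have : Finsupp.single i 1 + (s - Finsupp.single i 1) = s := by
        ext j
        rcases eq_or_ne j i with rfl | hj
        · simp [Finsupp.single_apply]
          omega
        · simp [Finsupp.single_apply, hj, Ne.symm hj]
      simp [this]
  simp only [key]
  rw [← map_sum, ← Finset.sum_mul, smul_monomial]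
  congr 1
  rw [smul_eq_mul]
  congr 1
  rw [← hdeg]
  push_cast
  rfl

/-- For `ω ∈ ℱ¹(ℙⁿ,e)`, `1 ∉ I(ω)`: there is no 1-form `η` with
`dω = ω ∧ η`; equivalently the class of `dω` in `H²(ω)` is nonzero and `I(ω)` is proper. -/
theorem stmt10 (n e : ℕ) (ω : Fin (n+1) → PolyS n) (hfol : IsFoliation n e ω) :
    (1 : PolyS n) ∉ Iideal ω ∧
    (¬ ∃ η : Fin (n+1) → PolyS n, ∀ i j, dcoeff ω i j = ω i * η j - ω j * η i) ∧
    Iideal ω ≠ ⊤ := by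
  obtain ⟨hw0, he2, hhom, hint, heulsum, hht⟩ := hfol
  have key : ¬ ∃ η : Fin (n+1) → PolyS n,
      ∀ i j, dcoeff ω i j = ω i * η j - ω j * η i := by
    rintro ⟨η, hη⟩
    have hder : ∀ j, ∑ i, X i * pderiv j (ω i) = - ω j := by
      intro j
      have h0 : pderiv j (∑ i, X i * ω i) = 0 := by rw [heulsum]; simp
      rw [map_sum] at h0
      have hterm : ∀ i : Fin (n+1), pderiv j (X i * ω i)
          = (if i = j then ω i else 0) + X i * pderiv j (ω i) := by
        intro i
        rw [pderiv_mul, pderiv_X]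
        rcases eq_or_ne i j with rfl | h
        · simp [Pi.single_eq_same]
        · simp [Pi.single_eq_of_ne h, h]
      rw [Finset.sum_congr rfl fun i _ => hterm i, Finset.sum_add_distrib] at h0
      simp only [Finset.sum_ite_eq', Finset.mem_univ, if_true] at h0
      linear_combination h0
    have hkey : ∀ j, ∑ i, X i * dcoeff ω i j = (e : ℂ) • ω j := by
      intro j
      unfold dcoeff
      simp only [mul_sub]
      rw [Finset.sum_sub_distrib, euler_id (hhom j), hder j]
      have hc : ((e - 1 : ℕ) : ℂ) = (e : ℂ) - 1 := by
        have : 1 ≤ e := by omega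
        push_cast [this]
        ring
      rw [hc, sub_smul, one_smul]
      ring
    set g := ∑ i, X i * η i with hg
    obtain ⟨j, hj⟩ : ∃ j, ω j ≠ 0 := by
      by_contra h
      push_neg at h
      exact hw0 (funext h)
    have h2 : (e : ℂ) • ω j = - (ω j * g) := by
      rw [← hkey j]
      calc ∑ i, X i * dcoeff ω i j
          = ∑ i, X i * (ω i * η j - ω j * η i) := by
            exact Finset.sum_congr rfl fun i _ => by rw [hη]
        _ = (∑ i, X i * ω i) * η j - ω j * g := by
            rw [hg, Finset.sum_mul, Finset.mul_sum, ← Finset.sum_sub_distrib]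
            exact Finset.sum_congr rfl fun i _ => by ring
        _ = - (ω j * g) := by rw [heulsum]; ring
    rw [smul_eq_C_mul] at h2
    have hfac : ω j * (g + C (e : ℂ)) = 0 := by linear_combination h2
    rcases mul_eq_zero.mp hfac with h | h
    · exact hj h
    · have hcc := congrArg constantCoeff h
      simp only [map_add, map_sum, map_mul, constantCoeff_X, zero_mul,
        Finset.sum_const_zero, constantCoeff_C, map_zero, zero_add, hg] at hcc
      have : (e : ℂ) = 0 := hcc
      have : e = 0 := by exact_mod_cast this
      omega
  refine ⟨?_, key, ?_⟩
  · intro h1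
    obtain ⟨η, hη⟩ := h1
    exact key ⟨η, fun i j => by linear_combination hη i j⟩
  · intro htop
    obtain ⟨η, hη⟩ := (Ideal.eq_top_iff_one _).mp htop
    exact key ⟨η, fun i j => by linear_combination hη i j⟩

end
end

section
/- Let ω ∈ ℱ¹(ℙⁿ,e) and let p ∈ ℂ^{n+1}. Suppose there exist formal power series f, g ∈ ℂ[[t₀,…,tₙ]] with f(0) ≠ 0 (so f is a unit) such that, after the substitution xᵢ ↦ pᵢ + tᵢ, one has ω = f·dg as formal 1-forms, i.e., Aᵢ(p₀+t₀,…,pₙ+tₙ) = f·(∂g/∂tᵢ) in ℂ[[t₀,…,tₙ]] for every i. Then p is a division point of ω: there exist h ∈ S with h(p) ≠ 0 and η ∈ Ω¹_S such that h·dω = ω ∧ η; equivalently, 1 ∈ I(ω)·S_{𝔪_p}, where 𝔪_p is the maximal ideal of polynomials vanishing at p. -/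
open MvPolynomial

noncomputable section

/-- The formal partial derivative `∂f/∂tᵢ` of a multivariate formal power series. -/
def psDeriv {n : ℕ} (i : Fin (n+1)) (f : MvPowerSeries (Fin (n+1)) ℂ) :
    MvPowerSeries (Fin (n+1)) ℂ :=
  fun m => ((m i : ℂ) + 1) * MvPowerSeries.coeff (R := ℂ) (m + Finsupp.single i 1) f

/-- Substitution `xᵢ ↦ pᵢ + tᵢ` from polynomials into formal power series centered at `p`. -/
def substAt {n : ℕ} (p : Fin (n+1) → ℂ) : PolyS n →+* MvPowerSeries (Fin (n+1)) ℂ :=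
  (MvPolynomial.aeval fun i => MvPowerSeries.C (σ := Fin (n+1)) (R := ℂ) (p i) + MvPowerSeries.X i).toRingHom

namespace Stmt12Aux

abbrev B (n : ℕ) := MvPowerSeries (Fin (n+1)) ℂ

variable {n : ℕ}

lemma psDeriv_coeff (i : Fin (n+1)) (f : B n) (m : Fin (n+1) →₀ ℕ) :
    MvPowerSeries.coeff (R := ℂ) m (psDeriv i f)
      = ((m i : ℂ) + 1) * MvPowerSeries.coeff (R := ℂ) (m + Finsupp.single i 1) f := rfl

lemma psDeriv_add (i : Fin (n+1)) (f g : B n) :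
    psDeriv i (f + g) = psDeriv i f + psDeriv i g := by
  apply MvPowerSeries.ext
  intro m
  simp [psDeriv_coeff, mul_add]

lemma single_le_of_ne (i : Fin (n+1)) (a : Fin (n+1) →₀ ℕ) (h : a i ≠ 0) :
    Finsupp.single i 1 ≤ a := by
  rw [Finsupp.single_le_iff]
  omega

lemma sum_shift_fst (i : Fin (n+1)) (m : Fin (n+1) →₀ ℕ) (F G : (Fin (n+1) →₀ ℕ) → ℂ) :
    (Finset.HasAntidiagonal.antidiagonal ((m + Finsupp.single i 1 : (Fin (n+1) →₀ ℕ)))).sum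
        (fun q => (q.1 i : ℂ) * (F q.1 * G q.2))
      = (Finset.HasAntidiagonal.antidiagonal m).sum
        (fun q => ((q.1 i : ℂ) + 1) * (F (q.1 + Finsupp.single i 1) * G q.2)) := by
  apply Finset.sum_bij_ne_zero (i := fun q _ _ => (q.1 - Finsupp.single i 1, q.2))
  · intro a ha hne
    have hai : a.1 i ≠ 0 := by
      intro h; apply hne; rw [h]; simp
    have h1 := single_le_of_ne i a.1 hai
    rw [Finset.HasAntidiagonal.mem_antidiagonal] at ha ⊢
    rw [tsub_add_eq_add_tsub h1, ha, add_tsub_cancel_right]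
  · intro a ha hane b hb hbne hab
    have hai : a.1 i ≠ 0 := by intro h; apply hane; rw [h]; simp
    have hbi : b.1 i ≠ 0 := by intro h; apply hbne; rw [h]; simp
    have h1 := single_le_of_ne i a.1 hai
    have h2 := single_le_of_ne i b.1 hbi
    have e1 := congrArg Prod.fst hab
    have e2 := congrArg Prod.snd hab
    simp only at e1 e2
    have : a.1 = b.1 := by
      have := congrArg (· + Finsupp.single i 1) e1
      simpa [tsub_add_cancel_of_le h1, tsub_add_cancel_of_le h2] using this
    exact Prod.ext this e2
  · intro b hb hbne
    refine ⟨(b.1 + Finsupp.single i 1, b.2), ?_, ?_, ?_⟩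
    · rw [Finset.HasAntidiagonal.mem_antidiagonal] at hb ⊢
      rw [add_right_comm, hb]
    · simpa [Finsupp.add_apply, Finsupp.single_eq_same] using hbne
    · simp
  · intro a ha hane
    have hai : a.1 i ≠ 0 := by intro h; apply hane; rw [h]; simp
    have h1 := single_le_of_ne i a.1 hai
    have h1i : 1 ≤ a.1 i := Nat.one_le_iff_ne_zero.mpr hai
    simp only [tsub_add_cancel_of_le h1, Finsupp.tsub_apply, Finsupp.single_eq_same]
    have : ((a.1 i - 1 : ℕ) : ℂ) + 1 = (a.1 i : ℂ) := by
      push_cast [h1i]; ring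
    rw [this]
lemma sum_shift_snd (i : Fin (n+1)) (m : Fin (n+1) →₀ ℕ) (F G : (Fin (n+1) →₀ ℕ) → ℂ) :
    (Finset.HasAntidiagonal.antidiagonal ((m + Finsupp.single i 1 : (Fin (n+1) →₀ ℕ)))).sum
        (fun q => (q.2 i : ℂ) * (F q.1 * G q.2))
      = (Finset.HasAntidiagonal.antidiagonal m).sum
        (fun q => ((q.2 i : ℂ) + 1) * (F q.1 * G (q.2 + Finsupp.single i 1))) := by
  have swap1 : ∀ (mm : Fin (n+1) →₀ ℕ) (H : (Fin (n+1) →₀ ℕ) × (Fin (n+1) →₀ ℕ) → ℂ),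
      (Finset.HasAntidiagonal.antidiagonal mm).sum H
        = (Finset.HasAntidiagonal.antidiagonal mm).sum (fun q => H (q.2, q.1)) := by
    intro mm H
    apply Finset.sum_nbij' (i := fun q => (q.2, q.1)) (j := fun q => (q.2, q.1)) <;>
      simp [Finset.mem_antidiagonal, add_comm]
  rw [swap1 (m + Finsupp.single i 1) (fun q => (q.2 i : ℂ) * (F q.1 * G q.2))]
  rw [swap1 m (fun q => ((q.2 i : ℂ) + 1) * (F q.1 * G (q.2 + Finsupp.single i 1)))]
  simpa [mul_comm, mul_left_comm] using
    sum_shift_fst i m (fun a => G a) (fun b => F b)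

lemma psDeriv_mul (i : Fin (n+1)) (f g : B n) :
    psDeriv i (f * g) = psDeriv i f * g + f * psDeriv i g := by
  apply MvPowerSeries.ext
  intro m
  rw [map_add, psDeriv_coeff, MvPowerSeries.coeff_mul, MvPowerSeries.coeff_mul,
    MvPowerSeries.coeff_mul, Finset.mul_sum]
  have key : ∀ q ∈ Finset.HasAntidiagonal.antidiagonal (m + Finsupp.single i 1),
      ((m i : ℂ) + 1) * (MvPowerSeries.coeff (R := ℂ) q.1 f * MvPowerSeries.coeff (R := ℂ) q.2 g)
        = (q.1 i : ℂ) * (MvPowerSeries.coeff (R := ℂ) q.1 f * MvPowerSeries.coeff (R := ℂ) q.2 g)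
          + (q.2 i : ℂ) * (MvPowerSeries.coeff (R := ℂ) q.1 f * MvPowerSeries.coeff (R := ℂ) q.2 g) := by
    intro q hq
    rw [Finset.HasAntidiagonal.mem_antidiagonal] at hq
    have h0 : q.1 i + q.2 i = m i + 1 := by
      have := congrArg (fun z => z i) hq
      simpa [Finsupp.add_apply, Finsupp.single_eq_same] using this
    have h1 : (q.1 i : ℂ) + (q.2 i : ℂ) = (m i : ℂ) + 1 := by exact_mod_cast congrArg Nat.cast h0
    rw [← add_mul, h1]
  rw [Finset.sum_congr rfl key, Finset.sum_add_distrib,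
    sum_shift_fst i m (fun a => MvPowerSeries.coeff (R := ℂ) a f) (fun b => MvPowerSeries.coeff (R := ℂ) b g),
    sum_shift_snd i m (fun a => MvPowerSeries.coeff (R := ℂ) a f) (fun b => MvPowerSeries.coeff (R := ℂ) b g)]
  congr 1
  · apply Finset.sum_congr rfl; intro q hq
    rw [psDeriv_coeff]; ring
  · apply Finset.sum_congr rfl; intro q hq
    rw [psDeriv_coeff]; ring

lemma psDeriv_comm (i j : Fin (n+1)) (f : B n) :
    psDeriv i (psDeriv j f) = psDeriv j (psDeriv i f) := by
  rcases eq_or_ne i j with rfl | hij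
  · rfl
  · apply MvPowerSeries.ext
    intro m
    rw [psDeriv_coeff, psDeriv_coeff, psDeriv_coeff, psDeriv_coeff]
    have h1 : (m + Finsupp.single i 1 : Fin (n+1) →₀ ℕ) j = m j := by
      simp [Finsupp.add_apply, Finsupp.single_apply, hij]
    have h2 : (m + Finsupp.single j 1 : Fin (n+1) →₀ ℕ) i = m i := by
      simp [Finsupp.add_apply, Finsupp.single_apply, hij.symm]
    rw [h1, h2, add_right_comm m (Finsupp.single i 1) (Finsupp.single j 1)]
    ring

lemma psDeriv_C (i : Fin (n+1)) (c : ℂ) :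
    psDeriv i (MvPowerSeries.C (σ := Fin (n+1)) (R := ℂ) c) = 0 := by
  apply MvPowerSeries.ext
  intro m
  rw [psDeriv_coeff, MvPowerSeries.coeff_C, map_zero]
  rw [if_neg, mul_zero]
  intro h
  have := DFunLike.congr_fun h i
  simp [Finsupp.add_apply, Finsupp.single_eq_same] at this

lemma psDeriv_X (i j : Fin (n+1)) :
    psDeriv i (MvPowerSeries.X j : B n) = if i = j then 1 else 0 := by
  rcases eq_or_ne i j with rfl | hij
  · rw [if_pos rfl]
    apply MvPowerSeries.ext
    intro m
    rw [psDeriv_coeff, MvPowerSeries.coeff_X, MvPowerSeries.coeff_one]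
    rcases eq_or_ne m 0 with rfl | hm
    · rw [if_pos (by simp), if_pos rfl]; simp
    · rw [if_neg, if_neg hm, mul_zero]
      intro h
      apply hm
      have := congrArg (fun z => z - Finsupp.single i 1) h
      simpa using this
  · rw [if_neg hij]
    apply MvPowerSeries.ext
    intro m
    rw [psDeriv_coeff, MvPowerSeries.coeff_X, map_zero]
    rw [if_neg, mul_zero]
    intro h
    have := DFunLike.congr_fun h i
    simp [Finsupp.add_apply, Finsupp.single_eq_same, Finsupp.single_apply,
      (Ne.symm hij)] at this

lemma substAt_X (p : Fin (n+1) → ℂ) (j : Fin (n+1)) :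
    substAt p (X j) = MvPowerSeries.C (σ := Fin (n+1)) (R := ℂ) (p j) + MvPowerSeries.X j := by
  simp [substAt]

lemma substAt_C (p : Fin (n+1) → ℂ) (c : ℂ) :
    substAt p (C c) = MvPowerSeries.C (σ := Fin (n+1)) (R := ℂ) c := by
  simp [substAt]
  rfl

lemma substAt_pderiv (p : Fin (n+1) → ℂ) (i : Fin (n+1)) (q : PolyS n) :
    substAt p (pderiv i q) = psDeriv i (substAt p q) := by
  induction q using MvPolynomial.induction_on with
  | C c => simp [substAt_C, psDeriv_C]
  | add q r hq hr => rw [map_add, map_add, map_add, psDeriv_add, hq, hr]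
  | mul_X q j hq =>
    rw [pderiv_mul, map_add, map_mul, map_mul, map_mul, hq, substAt_X,
      psDeriv_mul]
    congr 1
    rcases eq_or_ne i j with rfl | hij
    · rw [pderiv_X_self, map_one, psDeriv_add, psDeriv_C, psDeriv_X, if_pos rfl, zero_add]
    · rw [pderiv_X_of_ne (Ne.symm hij), map_zero, psDeriv_add, psDeriv_C, psDeriv_X,
        if_neg hij, zero_add]

variable {n : ℕ}

lemma formal_identity (p : Fin (n+1) → ℂ) (ω : Fin (n+1) → PolyS n)
    (f g : B n) (hf0 : MvPowerSeries.constantCoeff (σ := Fin (n+1)) (R := ℂ) f ≠ 0)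
    (h : ∀ i, substAt p (ω i) = f * psDeriv i g) (i j : Fin (n+1)) :
    substAt p (dcoeff ω i j)
      = substAt p (ω i) * (-(psDeriv j f) * f⁻¹)
        - substAt p (ω j) * (-(psDeriv i f) * f⁻¹) := by
  have hinv : f * f⁻¹ = 1 := MvPowerSeries.mul_inv_cancel f hf0
  have hcomm := psDeriv_comm i j g
  rw [dcoeff, map_sub, substAt_pderiv, substAt_pderiv, h i, h j,
    psDeriv_mul, psDeriv_mul]
  linear_combination f * hcomm -
    (psDeriv i f * psDeriv j g - psDeriv j f * psDeriv i g) * hinv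

def tauA (p : Fin (n+1) → ℂ) : PolyS n →ₐ[ℂ] PolyS n :=
  MvPolynomial.aeval (fun i => X i + C (p i))

def tauB (p : Fin (n+1) → ℂ) : PolyS n →ₐ[ℂ] PolyS n :=
  MvPolynomial.aeval (fun i => X i - C (p i))

lemma tauA_tauB (p : Fin (n+1) → ℂ) (q : PolyS n) : tauA p (tauB p q) = q := by
  have : (tauA p).comp (tauB p) = AlgHom.id ℂ (PolyS n) := by
    apply MvPolynomial.algHom_ext
    intro i
    simp [tauA, tauB]
  exact DFunLike.congr_fun this q

lemma tauB_tauA (p : Fin (n+1) → ℂ) (q : PolyS n) : tauB p (tauA p q) = q := by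
  have : (tauB p).comp (tauA p) = AlgHom.id ℂ (PolyS n) := by
    apply MvPolynomial.algHom_ext
    intro i
    simp [tauA, tauB]
  exact DFunLike.congr_fun this q

lemma substAt_eq (p : Fin (n+1) → ℂ) (q : PolyS n) :
    substAt p q = ((tauA p q : PolyS n) : B n) := by
  have : substAt p
      = (MvPolynomial.coeToMvPowerSeries.ringHom).comp (tauA p).toRingHom := by
    apply MvPolynomial.ringHom_ext
    · intro a
      simp [substAt_C, tauA]
    · intro i
      simp [substAt_X, tauA, add_comm]
  rw [this]
  rfl

def mI (p : Fin (n+1) → ℂ) : Ideal (PolyS n) :=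
  Ideal.span (Set.range fun i => X i - C (p i))

lemma eval_eq_zero_of_mem_mI (p : Fin (n+1) → ℂ) {a : PolyS n} (ha : a ∈ mI p) :
    eval p a = 0 := by
  have hle : mI p ≤ RingHom.ker (MvPolynomial.eval p) := by
    rw [mI, Ideal.span_le]
    rintro _ ⟨i, rfl⟩
    simp [RingHom.mem_ker]
  exact hle ha

lemma mem_mI_pow (p : Fin (n+1) → ℂ) (k : ℕ) (q : PolyS n)
    (h : ∀ m : Fin (n+1) →₀ ℕ, (∀ i, m i ≤ k) →
      MvPowerSeries.coeff (R := ℂ) m (substAt p q) = 0) :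
    q ∈ (mI p)^(k+1) := by
  have hq : q = tauB p (tauA p q) := (tauB_tauA p q).symm
  rw [hq, ← MvPolynomial.support_sum_monomial_coeff (tauA p q), map_sum]
  apply Ideal.sum_mem
  intro m hm
  have hcm : MvPolynomial.coeff m (tauA p q) ≠ 0 := MvPolynomial.mem_support_iff.mp hm
  have hcoe : MvPowerSeries.coeff (R := ℂ) m (substAt p q) = MvPolynomial.coeff m (tauA p q) := by
    rw [substAt_eq]
    exact MvPolynomial.coeff_coe _ m
  obtain ⟨i0, hi0⟩ : ∃ i, k + 1 ≤ m i := by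
    by_contra h'
    push_neg at h'
    exact hcm (hcoe ▸ h m (fun i => by have := h' i; omega))
  have hx : (X i0 - C (p i0) : PolyS n) ∈ mI p := Ideal.subset_span ⟨i0, rfl⟩
  have hpow : (X i0 - C (p i0) : PolyS n) ^ (m i0) ∈ (mI p)^(k+1) :=
    Ideal.pow_le_pow_right hi0 (Ideal.pow_mem_pow hx (m i0))
  have hi0s : i0 ∈ m.support := Finsupp.mem_support_iff.mpr (by omega)
  show (tauB p) (monomial m (MvPolynomial.coeff m (tauA p q))) ∈ (mI p)^(k+1)
  rw [tauB, MvPolynomial.aeval_monomial]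
  apply Ideal.mul_mem_left
  rw [Finsupp.prod, ← Finset.mul_prod_erase m.support _ hi0s]
  exact Ideal.mul_mem_right _ _ hpow


lemma approx (p : Fin (n+1) → ℂ) (ω : Fin (n+1) → PolyS n)
    (f g : B n) (hf0 : MvPowerSeries.constantCoeff (σ := Fin (n+1)) (R := ℂ) f ≠ 0)
    (h : ∀ i, substAt p (ω i) = f * psDeriv i g) (k : ℕ) :
    ∃ η : Fin (n+1) → PolyS n, ∀ i j,
      dcoeff ω i j - (ω i * η j - ω j * η i) ∈ (mI p)^(k+1) := by
  classical
  set b : Fin (n+1) →₀ ℕ := Finsupp.equivFunOnFinite.symm (fun _ => k+1) with hb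
  have hbap : ∀ i, b i = k + 1 := fun i => rfl
  refine ⟨fun l => tauB p (MvPowerSeries.trunc ℂ b (-(psDeriv l f) * f⁻¹)), ?_⟩
  intro i j
  apply mem_mI_pow
  intro m hm
  have hsub : ∀ l, substAt p (tauB p (MvPowerSeries.trunc ℂ b (-(psDeriv l f) * f⁻¹)))
      = ((MvPowerSeries.trunc ℂ b (-(psDeriv l f) * f⁻¹) : PolyS n) : B n) := by
    intro l
    rw [substAt_eq, tauA_tauB]
  have key : ∀ (u : B n) (l : Fin (n+1)),
      MvPowerSeries.coeff (R := ℂ) m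
        (u * ((-(psDeriv l f) * f⁻¹)
          - ((MvPowerSeries.trunc ℂ b (-(psDeriv l f) * f⁻¹) : PolyS n) : B n))) = 0 := by
    intro u l
    rw [MvPowerSeries.coeff_mul]
    apply Finset.sum_eq_zero
    intro q hq
    rw [Finset.HasAntidiagonal.mem_antidiagonal] at hq
    have hq2 : ∀ i', q.2 i' ≤ k := by
      intro i'
      have h1 := DFunLike.congr_fun hq i'
      rw [Finsupp.add_apply] at h1
      have := hm i'
      omega
    have hlt : q.2 < b := by
      rw [lt_iff_le_and_ne]
      constructor
      · intro i'
        rw [hbap]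
        exact (hq2 i').trans (Nat.le_succ k)
      · intro hqb
        have h2 := DFunLike.congr_fun hqb 0
        rw [hbap] at h2
        have := hq2 0
        omega
    have hz : MvPowerSeries.coeff (R := ℂ) q.2
        ((-(psDeriv l f) * f⁻¹)
          - ((MvPowerSeries.trunc ℂ b (-(psDeriv l f) * f⁻¹) : PolyS n) : B n)) = 0 := by
      rw [map_sub, MvPolynomial.coeff_coe, MvPowerSeries.coeff_trunc, if_pos hlt, sub_self]
    rw [hz, mul_zero]
  have hrw : substAt p (dcoeff ω i j
        - (ω i * tauB p (MvPowerSeries.trunc ℂ b (-(psDeriv j f) * f⁻¹))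
          - ω j * tauB p (MvPowerSeries.trunc ℂ b (-(psDeriv i f) * f⁻¹))))
      = substAt p (ω i) * ((-(psDeriv j f) * f⁻¹)
            - ((MvPowerSeries.trunc ℂ b (-(psDeriv j f) * f⁻¹) : PolyS n) : B n))
        - substAt p (ω j) * ((-(psDeriv i f) * f⁻¹)
            - ((MvPowerSeries.trunc ℂ b (-(psDeriv i f) * f⁻¹) : PolyS n) : B n)) := by
    rw [map_sub, map_sub, map_mul (substAt p), map_mul (substAt p), hsub, hsub,
      formal_identity p ω f g hf0 h i j]
    ring
  rw [hrw, map_sub, key (substAt p (ω i)) j, key (substAt p (ω j)) i, sub_zero]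

def Phi (ω : Fin (n+1) → PolyS n) :
    (Fin (n+1) → PolyS n) →ₗ[PolyS n] (Fin (n+1) → Fin (n+1) → PolyS n) where
  toFun η := fun i j => ω i * η j - ω j * η i
  map_add' a b := by
    funext i j
    simp only [Pi.add_apply]
    ring
  map_smul' c a := by
    funext i j
    simp only [Pi.smul_apply, smul_eq_mul, RingHom.id_apply]
    ring

lemma pi_mem_smul (I : Ideal (PolyS n)) (v : Fin (n+1) → Fin (n+1) → PolyS n)
    (h : ∀ i j, v i j ∈ I) :
    v ∈ I • (⊤ : Submodule (PolyS n) (Fin (n+1) → Fin (n+1) → PolyS n)) := by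
  classical
  have hv : v = ∑ i : Fin (n+1), ∑ j : Fin (n+1),
      (v i j) • (Pi.single i (Pi.single j (1 : PolyS n)) : Fin (n+1) → Fin (n+1) → PolyS n) := by
    funext a c
    simp only [Finset.sum_apply, Pi.smul_apply, smul_eq_mul, Pi.single_apply, ite_apply,
      Pi.zero_apply, mul_ite, mul_one, mul_zero]
    simp [Finset.sum_ite_eq']
  rw [hv]
  exact Submodule.sum_mem _ fun i _ => Submodule.sum_mem _ fun j _ =>
    Submodule.smul_mem_smul (h i j) trivial

theorem main (ω : Fin (n+1) → PolyS n) (p : Fin (n+1) → ℂ)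
    (f g : B n) (hf0 : MvPowerSeries.constantCoeff (σ := Fin (n+1)) (R := ℂ) f ≠ 0)
    (hfd : ∀ i, substAt p (ω i) = f * psDeriv i g) :
    ∃ h : PolyS n, ∃ η : Fin (n+1) → PolyS n, eval p h ≠ 0 ∧
      ∀ i j, h * dcoeff ω i j = ω i * η j - ω j * η i := by
  classical
  let M : Submodule (PolyS n) (Fin (n+1) → Fin (n+1) → PolyS n) := LinearMap.range (Phi ω)
  let x : Fin (n+1) → Fin (n+1) → PolyS n := fun i j => dcoeff ω i j
  let xbar : (Fin (n+1) → Fin (n+1) → PolyS n) ⧸ M := Submodule.Quotient.mk x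
  have step1 : ∀ k : ℕ, xbar ∈ (mI p)^(k+1) •
      (⊤ : Submodule (PolyS n) ((Fin (n+1) → Fin (n+1) → PolyS n) ⧸ M)) := by
    intro k
    obtain ⟨η, hη⟩ := approx p ω f g hf0 hfd k
    have hxw : x - Phi ω η ∈ (mI p)^(k+1) •
        (⊤ : Submodule (PolyS n) (Fin (n+1) → Fin (n+1) → PolyS n)) := by
      apply pi_mem_smul
      intro i j
      simpa [Phi, x] using hη i j
    have hmk : xbar = Submodule.Quotient.mk (x - Phi ω η) := by
      rw [Submodule.Quotient.eq]
      have hx' : x - (x - Phi ω η) = Phi ω η := sub_sub_cancel _ _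
      rw [hx']
      exact LinearMap.mem_range_self (Phi ω) η
    rw [hmk]
    have h2 : Submodule.map M.mkQ ((mI p)^(k+1) •
          (⊤ : Submodule (PolyS n) (Fin (n+1) → Fin (n+1) → PolyS n)))
        = (mI p)^(k+1) •
          (⊤ : Submodule (PolyS n) ((Fin (n+1) → Fin (n+1) → PolyS n) ⧸ M)) := by
      rw [Submodule.map_smul'', Submodule.map_top, Submodule.range_mkQ]
    rw [← Submodule.mkQ_apply, ← h2]
    exact Submodule.mem_map_of_mem hxw
  obtain ⟨k, hk⟩ := Ideal.exists_pow_inf_eq_pow_smul (mI p)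
      (Submodule.span (PolyS n) {xbar})
  have h1 : xbar ∈ (mI p)^(k+1) • (⊤ : Submodule (PolyS n) _)
      ⊓ Submodule.span (PolyS n) {xbar} :=
    ⟨step1 k, Submodule.mem_span_singleton_self xbar⟩
  rw [hk (k+1) (Nat.le_succ k)] at h1
  have h2 : xbar ∈ (mI p) • Submodule.span (PolyS n) {xbar} := by
    have he : k + 1 - k = 1 := by omega
    rw [he, pow_one] at h1
    exact Submodule.smul_mono le_rfl inf_le_right h1
  rw [Submodule.mem_smul_span_singleton] at h2
  obtain ⟨a, haI, hax⟩ := h2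
  have hzero : (1 - a) • xbar = 0 := by
    rw [sub_smul, one_smul, hax, sub_self]
  have hmem : (1 - a) • x ∈ M := by
    rw [← Submodule.Quotient.mk_eq_zero, Submodule.Quotient.mk_smul]
    exact hzero
  obtain ⟨η, hη⟩ := hmem
  refine ⟨1 - a, η, ?_, ?_⟩
  · rw [map_sub, map_one, eval_eq_zero_of_mem_mI p haI, sub_zero]
    exact one_ne_zero
  · intro i j
    have hpt := congrFun (congrFun hη i) j
    simpa [Phi, x, Pi.smul_apply, smul_eq_mul] using hpt.symm

end Stmt12Aux

/-- Let `ω ∈ ℱ¹(ℙⁿ,e)` and `p ∈ ℂ^{n+1}`. If, formally around `p`,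
`ω = f·dg` for some formal power series `f, g` with `f(0) ≠ 0`, then `p` is a division
point of `ω`: there are `h ∈ S` with `h(p) ≠ 0` and a polynomial 1-form `η` with
`h·dω = ω ∧ η`. -/
theorem stmt12 (n e : ℕ) (ω : Fin (n+1) → PolyS n) (hfol : IsFoliation n e ω)
    (p : Fin (n+1) → ℂ)
    (hfg : ∃ f g : MvPowerSeries (Fin (n+1)) ℂ,
      MvPowerSeries.constantCoeff (σ := Fin (n+1)) (R := ℂ) f ≠ 0 ∧
      ∀ i, substAt p (ω i) = f * psDeriv i g) :
    ∃ h : PolyS n, ∃ η : Fin (n+1) → PolyS n, eval p h ≠ 0 ∧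
      ∀ i j, h * dcoeff ω i j = ω i * η j - ω j * η i := by
  obtain ⟨f, g, hf0, hfd⟩ := hfg
  exact Stmt12Aux.main ω p f g hf0 hfd

end
end

section
/- Let ω = Σ_{i=0}^{2} Aᵢ dxᵢ ∈ ℱ¹(ℙ²,e) be a foliation one-form on ℙ² and let F₀, F₁, F₂ ∈ ℂ[x₀,…,xₙ] be homogeneous polynomials of a common degree ν ≥ 1. Define the pullback F*ω := Σ_{i=0}^{2} Aᵢ(F₀,F₁,F₂)·dFᵢ, a 1-form with coefficients in ℂ[x₀,…,xₙ]. Then: (a) F*ω is integrable, i.e., F*ω ∧ d(F*ω) = 0; and (b) for every h ∈ I(ω), the polynomial h(F₀,F₁,F₂) belongs to I(F*ω). In particular, Aᵢ(F₀,F₁,F₂) ∈ I(F*ω) for i = 0,1,2. -/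
open MvPolynomial

noncomputable section

/-- The pullback `F*ω = Σᵢ Aᵢ(F)·dFᵢ` of a 1-form `ω = Σ Aᵢ dxᵢ` on `ℙ²` along
`F = (F₀,F₁,F₂)`, written in coordinates. -/
def pullbackForm {n : ℕ} (ω : Fin (2+1) → PolyS 2) (F : Fin 3 → PolyS n) :
    Fin (n+1) → PolyS n :=
  fun j => ∑ i, (aeval F (ω i)) * pderiv j (F i)

lemma pderiv_pderiv_comm' {σ : Type*} [DecidableEq σ] {R : Type*} [CommSemiring R]
    (i j : σ) (p : MvPolynomial σ R) :
    pderiv i (pderiv j p) = pderiv j (pderiv i p) := by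
  induction p using MvPolynomial.induction_on' with
  | add p q hp hq => simp [hp, hq]
  | monomial u a =>
    rcases eq_or_ne i j with rfl | hij
    · rfl
    · simp only [pderiv_monomial]
      rw [tsub_right_comm]
      congr 1
      rw [Finsupp.tsub_apply, Finsupp.tsub_apply, Finsupp.single_apply,
        Finsupp.single_apply, if_neg hij, if_neg (Ne.symm hij)]
      push_cast [Nat.sub_zero]
      ring

lemma pderiv_aeval_fin {n m : ℕ} (F : Fin m → MvPolynomial (Fin (n+1)) ℂ) (j : Fin (n+1))
    (p : MvPolynomial (Fin m) ℂ) :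
    pderiv j (aeval F p) = ∑ l, aeval F (pderiv l p) * pderiv j (F l) := by
  induction p using MvPolynomial.induction_on with
  | C a => simp
  | add p q hp hq =>
    rw [map_add, map_add, hp, hq, ← Finset.sum_add_distrib]
    exact Finset.sum_congr rfl (fun l _ => by simp only [map_add]; ring)
  | mul_X p i hp =>
    have key : ∀ l : Fin m, l ∈ Finset.univ →
        aeval F ((pderiv l) (p * X i)) * pderiv j (F l)
        = aeval F (pderiv l p) * pderiv j (F l) * F i
          + (if l = i then aeval F p * pderiv j (F i) else 0) := by
      intro l _
      rcases eq_or_ne l i with rfl | h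
      · simp only [pderiv_mul, pderiv_X_self,
          mul_one, map_add, map_mul, aeval_X]
        rw [if_pos trivial]
        ring
      · simp only [pderiv_mul, pderiv_X_of_ne (Ne.symm h), mul_zero, add_zero, map_mul,
          aeval_X, if_neg h, add_zero]
        ring
    rw [map_mul, aeval_X, pderiv_mul, hp, Finset.sum_congr rfl key, Finset.sum_add_distrib,
      Finset.sum_ite_eq' Finset.univ i, if_pos (Finset.mem_univ i), Finset.sum_mul]

lemma sum_fin3 {M : Type*} [AddCommMonoid M] (f : Fin (2+1) → M) :
    ∑ i, f i = f 0 + f 1 + f 2 := Fin.sum_univ_three f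

lemma dcoeff_pullback {n : ℕ} (ω : Fin (2+1) → PolyS 2) (F : Fin 3 → PolyS n)
    (j k : Fin (n+1)) :
    dcoeff (pullbackForm ω F) j k =
      ∑ l, ∑ i, aeval F (pderiv l (ω i)) *
        (pderiv j (F l) * pderiv k (F i) - pderiv k (F l) * pderiv j (F i)) := by
  simp only [dcoeff, pullbackForm, map_sum, map_add, pderiv_mul, pderiv_aeval_fin, Fin.sum_univ_three, sum_fin3]
  rw [pderiv_pderiv_comm' j k (F 0), pderiv_pderiv_comm' j k (F 1),
    pderiv_pderiv_comm' j k (F 2)]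
  ring

/-- Let `ω ∈ ℱ¹(ℙ²,e)` and let `F₀,F₁,F₂` be homogeneous of common
degree `ν ≥ 1`. Then (a) `F*ω` is integrable; (b) for every `h ∈ I(ω)`, one has
`h(F₀,F₁,F₂) ∈ I(F*ω)`; in particular `Aᵢ(F₀,F₁,F₂) ∈ I(F*ω)` for each `i`. -/
theorem stmt15 (n e ν : ℕ) (ω : Fin (2+1) → PolyS 2) (hfol : IsFoliation 2 e ω)
    (F : Fin 3 → PolyS n) (hν : 1 ≤ ν) (hF : ∀ i, (F i).IsHomogeneous ν) :
    Integrable (pullbackForm ω F) ∧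
    (∀ h ∈ Iideal ω, aeval F h ∈ Iideal (pullbackForm ω F)) ∧
    (∀ i, aeval F (ω i) ∈ Iideal (pullbackForm ω F)) := by
  obtain ⟨-, -, -, hint, -, -⟩ := hfol
  have key : ∀ h : PolyS 2, ∀ η : Fin (2+1) → PolyS 2,
      (∀ i j, h * dcoeff ω i j = ω i * η j - ω j * η i) →
      aeval F h ∈ Iideal (pullbackForm ω F) := by
    intro h η hη
    refine ⟨fun j => ∑ i, aeval F (η i) * pderiv j (F i), fun j k => ?_⟩
    have H01 := congrArg (aeval F) (hη 0 1)
    have H02 := congrArg (aeval F) (hη 0 2)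
    have H12 := congrArg (aeval F) (hη 1 2)
    simp only [dcoeff, map_sub, map_mul] at H01 H02 H12
    rw [dcoeff_pullback]
    simp only [pullbackForm, Fin.sum_univ_three, sum_fin3]
    linear_combination
      (pderiv j (F 0) * pderiv k (F 1) - pderiv k (F 0) * pderiv j (F 1)) * H01 +
      (pderiv j (F 0) * pderiv k (F 2) - pderiv k (F 0) * pderiv j (F 2)) * H02 +
      (pderiv j (F 1) * pderiv k (F 2) - pderiv k (F 1) * pderiv j (F 2)) * H12
  have omem : ∀ i : Fin (2+1), ∀ a b, ω i * dcoeff ω a b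
      = ω a * dcoeff ω i b - ω b * dcoeff ω i a := by
    intro i a b
    have h := hint a b i
    simp only [dcoeff] at h ⊢
    linear_combination h
  refine ⟨?_, ?_, ?_⟩
  · intro a b c
    have Hint := congrArg (aeval F) (hint 0 1 2)
    simp only [dcoeff, map_sub, map_mul, map_add, map_zero] at Hint
    rw [dcoeff_pullback, dcoeff_pullback, dcoeff_pullback]
    simp only [pullbackForm, Fin.sum_univ_three, sum_fin3]
    linear_combination
      (pderiv a (F 0) * (pderiv b (F 1) * pderiv c (F 2) - pderiv c (F 1) * pderiv b (F 2))
       - pderiv b (F 0) * (pderiv a (F 1) * pderiv c (F 2) - pderiv c (F 1) * pderiv a (F 2))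
       + pderiv c (F 0) * (pderiv a (F 1) * pderiv b (F 2) - pderiv b (F 1) * pderiv a (F 2)))
        * Hint
  · rintro h ⟨η, hη⟩
    exact key h η hη
  · intro i
    exact key (ω i) (fun j => dcoeff ω i j) (omem i)

end
end
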